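/- arXiv:2408.00910 — 10 statements merged into one kernel-verified Lean document; each statement's English description precedes it below -/
import Mathlib

section
/- For finite groups G and H, nil(G × H) = nil(G) × nil(H), i.e., an element (g,h) of G × H lies in the nilpotentizer of G × H if and only if g ∈ nil(G) and h ∈ nil(H). -/
def nilpotentizer (G : Type*) [Group G] : Set G :=
  {g | ∀ h : G, Group.IsNilpotent (Subgroup.closure ({g, h} : Set G))}

def nilpotentizerOf {G : Type*} [Group G] (x : G) : Set G :=
  {g | Group.IsNilpotent (Subgroup.closure ({g, x} : Set G))}

def nilpotentGraph (G : Type*) [Group G] :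
    SimpleGraph {x : G // x ∉ nilpotentizer G} where
  Adj a b := a ≠ b ∧ Group.IsNilpotent (Subgroup.closure ({(a : G), (b : G)} : Set G))
  symm := ⟨fun a b ⟨hne, h⟩ => ⟨fun e => hne e.symm, by rwa [Set.pair_comm]⟩⟩
  loopless := ⟨fun a ⟨h, _⟩ => h rfl⟩

noncomputable def hypercenter (G : Type*) [Group G] : Subgroup G := Subgroup.upperCentralSeries G (Nat.card G)

instance {G : Type*} [Group G] : (hypercenter G).Normal := by
  unfold hypercenter; infer_instance

lemma nilpotent_of_le {G : Type*} [Group G] {K L : Subgroup G} (hKL : K ≤ L)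
    (hL : Group.IsNilpotent L) : Group.IsNilpotent K :=
  @nilpotent_of_surjective _ _ _ _ (Subgroup.isNilpotent (K.subgroupOf L))
    (Subgroup.subgroupOfEquivOfLe hKL).toMonoidHom (MulEquiv.surjective _)

theorem nilpotentizer_prod {G H : Type*} [Group G] [Group H] [Finite G] [Finite H]
    (g : G) (h : H) :
    (g, h) ∈ nilpotentizer (G × H) ↔ g ∈ nilpotentizer G ∧ h ∈ nilpotentizer H := by
  constructor
  · intro hgh
    constructor
    · intro x
      have hn := hgh (x, 1)
      have hmap : Subgroup.closure ({g, x} : Set G) =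
          (Subgroup.closure ({(g, h), (x, 1)} : Set (G × H))).map (MonoidHom.fst G H) := by
        rw [MonoidHom.map_closure]
        congr 1
        simp [Set.image_pair]
      rw [hmap]
      exact nilpotent_of_surjective _ ((MonoidHom.fst G H).subgroupMap_surjective _)
    · intro y
      have hn := hgh (1, y)
      have hmap : Subgroup.closure ({h, y} : Set H) =
          (Subgroup.closure ({(g, h), (1, y)} : Set (G × H))).map (MonoidHom.snd G H) := by
        rw [MonoidHom.map_closure]
        congr 1
        simp [Set.image_pair]
      rw [hmap]
      exact nilpotent_of_surjective _ ((MonoidHom.snd G H).subgroupMap_surjective _)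
  · rintro ⟨hg, hh⟩ ⟨x, y⟩
    have h1 : Group.IsNilpotent (Subgroup.closure ({g, x} : Set G)) := hg x
    have h2 : Group.IsNilpotent (Subgroup.closure ({h, y} : Set H)) := hh y
    have hprod : Group.IsNilpotent
        ((Subgroup.closure ({g, x} : Set G)).prod (Subgroup.closure ({h, y} : Set H))) :=
      nilpotent_of_mulEquiv
        ((Subgroup.prodEquiv (Subgroup.closure ({g, x} : Set G))
          (Subgroup.closure ({h, y} : Set H))).symm)
    refine nilpotent_of_le ?_ hprod
    rw [Subgroup.closure_le]
    rintro z (rfl | rfl)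
    · exact ⟨Subgroup.subset_closure (Or.inl rfl), Subgroup.subset_closure (Or.inl rfl)⟩
    · exact ⟨Subgroup.subset_closure (Or.inr rfl), Subgroup.subset_closure (Or.inr rfl)⟩
end

section
/- Let G be a finite group and x, y ∈ G. Then ⟨x, y⟩ is a nilpotent subgroup of G if and only if ⟨x·Z*(G), y·Z*(G)⟩ is a nilpotent subgroup of G/Z*(G). -/
lemma aux_subgroupOf_ucs_le {G : Type*} [Group G] (H : Subgroup G) (n : ℕ) :
    (Subgroup.upperCentralSeries G n).subgroupOf H ≤ Subgroup.upperCentralSeries H n := by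
  induction n with
  | zero =>
      intro g hg
      rw [Subgroup.mem_subgroupOf] at hg
      simp only [upperCentralSeries_zero, Subgroup.mem_bot] at hg ⊢
      exact Subtype.ext hg
  | succ n ih =>
      intro g hg
      rw [Subgroup.mem_subgroupOf] at hg
      rw [mem_upperCentralSeries_succ_iff] at hg ⊢
      intro h
      exact ih (Subgroup.mem_subgroupOf.mpr (by push_cast; exact hg h))

lemma aux_isNilpotent_of_quotient_ucs {G : Type*} [Group G] (n : ℕ)
    (h : Group.IsNilpotent (G ⧸ Subgroup.upperCentralSeries G n)) : Group.IsNilpotent G := by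
  induction n generalizing G with
  | zero =>
      refine (haveI := h; isNilpotent_of_ker_le_center (QuotientGroup.mk' (Subgroup.upperCentralSeries G 0)) ?_)
      rw [QuotientGroup.ker_mk']
      simp only [upperCentralSeries_zero]
      exact bot_le
  | succ n ih =>
      apply of_quotient_center_nilpotent
      apply ih
      have hle : Subgroup.center G ≤ Subgroup.upperCentralSeries G (n + 1) := by
        have := upperCentralSeries_mono G (Nat.one_le_iff_ne_zero.mpr (Nat.succ_ne_zero n))
        simpa [upperCentralSeries_one] using this
      have hmap : Subgroup.map (QuotientGroup.mk' (Subgroup.center G))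
          (Subgroup.upperCentralSeries G (n + 1)) = Subgroup.upperCentralSeries (G ⧸ Subgroup.center G) n := by
        rw [← comap_upperCentralSeries_quotient_center n,
          Subgroup.map_comap_eq_self_of_surjective (QuotientGroup.mk'_surjective _)]
      have e := QuotientGroup.quotientQuotientEquivQuotient (Subgroup.center G)
        (Subgroup.upperCentralSeries G (n + 1)) hle
      haveI := h
      exact nilpotent_of_mulEquiv
        (((QuotientGroup.quotientMulEquivOfEq hmap).symm.trans e).symm)

lemma aux_isNilpotent_of_ker_le_ucs {G H : Type*} [Group G] [Group H] (f : G →* H)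
    (n : ℕ) (hf : f.ker ≤ Subgroup.upperCentralSeries G n) (hH : Group.IsNilpotent f.range) :
    Group.IsNilpotent G := by
  apply aux_isNilpotent_of_quotient_ucs n
  haveI := hH
  haveI : Group.IsNilpotent (G ⧸ f.ker) :=
    nilpotent_of_mulEquiv (QuotientGroup.quotientKerEquivRange f).symm
  have hle : f.ker ≤ (Subgroup.upperCentralSeries G n).comap (MonoidHom.id G) := hf
  have hs : Function.Surjective
      (QuotientGroup.map f.ker (Subgroup.upperCentralSeries G n) (MonoidHom.id G) hle) := by
    intro q
    obtain ⟨g, rfl⟩ := QuotientGroup.mk_surjective q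
    exact ⟨g, rfl⟩
  exact nilpotent_of_surjective _ hs

theorem nilpotent_closure_pair_iff_quotient_hypercenter {G : Type*} [Group G] [Finite G]
    (x y : G) :
    Group.IsNilpotent (Subgroup.closure ({x, y} : Set G)) ↔
      Group.IsNilpotent (Subgroup.closure
        ({(x : G ⧸ hypercenter G), (y : G ⧸ hypercenter G)} : Set (G ⧸ hypercenter G))) := by
  set K := hypercenter G with hK
  set H := Subgroup.closure ({x, y} : Set G) with hH
  set f := (QuotientGroup.mk' K).comp H.subtype with hf
  have hrange : f.range = Subgroup.closure
      ({(x : G ⧸ K), (y : G ⧸ K)} : Set (G ⧸ K)) := by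
    rw [hf, MonoidHom.range_comp, Subgroup.range_subtype, hH, MonoidHom.map_closure]
    congr 1
    rw [Set.image_pair]
    rfl
  constructor
  · intro hnil
    haveI := hnil
    have := nilpotent_of_surjective f.rangeRestrict f.rangeRestrict_surjective
    rwa [hrange] at this
  · intro hnil
    refine aux_isNilpotent_of_ker_le_ucs f (Nat.card G) ?_ (by rwa [hrange])
    have hker : f.ker = K.subgroupOf H := by
      rw [hf, ← MonoidHom.comap_ker, QuotientGroup.ker_mk']
      rfl
    rw [hker, hK]
    exact aux_subgroupOf_ucs_le H (Nat.card G)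
end

section
/- Let G be a finite group with a strongly self-centralizing subgroup U. Then for every h ∈ G \ U and every nonidentity x ∈ U, the subgroup ⟨x, h⟩ is not nilpotent. -/
/-- A nontrivial nilpotent group has a nontrivial center. -/
lemma exists_center_ne_one {H : Type*} [Group H] [Group.IsNilpotent H] [Nontrivial H] :
    ∃ z : H, z ∈ Subgroup.center H ∧ z ≠ 1 := by
  have hnil := nilpotent_iff_lowerCentralSeries.mp (inferInstance : Group.IsNilpotent H)
  classical
  let n := Nat.find hnil
  have hbot : (⊤ : Subgroup H).lowerCentralSeries n = ⊥ := Nat.find_spec hnil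
  have hn0 : n ≠ 0 := by
    intro h0
    have : (⊤ : Subgroup H) = ⊥ := by
      rw [← Subgroup.lowerCentralSeries_zero (S := (⊤ : Subgroup H)), ← h0]; exact hbot
    obtain ⟨a, b, hab⟩ := exists_pair_ne H
    apply hab
    have ha : a ∈ (⊥ : Subgroup H) := this ▸ Subgroup.mem_top a
    have hb : b ∈ (⊥ : Subgroup H) := this ▸ Subgroup.mem_top b
    rw [Subgroup.mem_bot] at ha hb
    rw [ha, hb]
  obtain ⟨m, hnm⟩ := Nat.exists_eq_succ_of_ne_zero hn0
  have hm : (⊤ : Subgroup H).lowerCentralSeries m ≠ ⊥ := Nat.find_min hnil (by omega)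
  rw [hnm] at hbot
  obtain ⟨z, hz, hz1⟩ : ∃ z : H, z ∈ (⊤ : Subgroup H).lowerCentralSeries m ∧ z ≠ 1 := by
    by_contra hcon
    push_neg at hcon
    exact hm (eq_bot_iff.mpr fun y hy => Subgroup.mem_bot.mpr (hcon y hy))
  refine ⟨z, Subgroup.mem_center_iff.mpr fun g => ?_, hz1⟩
  have : z * g * z⁻¹ * g⁻¹ ∈ (⊤ : Subgroup H).lowerCentralSeries (m + 1) := by
    rw [Subgroup.lowerCentralSeries_succ]
    exact Subgroup.subset_closure ⟨z, hz, g, Subgroup.mem_top g, rfl⟩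
  rw [hbot, Subgroup.mem_bot] at this
  have := mul_eq_one_iff_eq_inv.mp this
  -- z * g * z⁻¹ = g
  have hzg : z * g * z⁻¹ = g := by
    rw [this]; simp
  calc g * z = z * g * z⁻¹ * z := by rw [hzg]
    _ = z * g := by group

theorem not_nilpotent_of_stronglySelfCentralizing {G : Type*} [Group G] [Finite G]
    (U : Subgroup G)
    (hU : ∀ x : G, x ∈ U → x ≠ 1 → Subgroup.centralizer {x} = U)
    (h : G) (hh : h ∉ U) (x : G) (hx : x ∈ U) (hx1 : x ≠ 1) :
    ¬ Group.IsNilpotent (Subgroup.closure ({x, h} : Set G)) := by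
  intro hnil
  set H := Subgroup.closure ({x, h} : Set G) with hH
  have hxH : x ∈ H := Subgroup.subset_closure (by simp)
  have hhH : h ∈ H := Subgroup.subset_closure (by simp)
  have : Nontrivial H := by
    refine ⟨⟨x, hxH⟩, 1, ?_⟩
    simp [Subtype.ext_iff, hx1]
  obtain ⟨z, hzc, hz1⟩ := exists_center_ne_one (H := H)
  -- z commutes with x, so (z : G) ∈ centralizer {x} = U
  have hzx : (z : G) * x = x * (z : G) := by
    have := Subgroup.mem_center_iff.mp hzc ⟨x, hxH⟩
    exact (congrArg Subtype.val this).symm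
  have hzU : (z : G) ∈ U := by
    rw [← hU x hx hx1]
    intro y hy
    rcases hy with rfl
    exact hzx.symm
  have hz1' : (z : G) ≠ 1 := fun e => hz1 (Subtype.ext e)
  -- h commutes with z, so h ∈ centralizer {z} = U
  apply hh
  rw [← hU (z : G) hzU hz1']
  intro y hy
  rcases hy with rfl
  have := Subgroup.mem_center_iff.mp hzc ⟨h, hhH⟩
  exact (congrArg Subtype.val this).symm
end

section
/- Let G and H be finite non-nilpotent groups. Then the nilpotent graph of G × H is connected. -/
open Subgroup

-- nilpotent transfers down subgroup inclusion
theorem nilp_of_le {K : Type*} [Group K] {A B : Subgroup K} (hAB : A ≤ B)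
    (hB : Group.IsNilpotent B) : Group.IsNilpotent A := by
  haveI := hB
  exact nilpotent_of_mulEquiv (Subgroup.subgroupOfEquivOfLe hAB)

-- prod of nilpotent subgroups nilpotent
theorem nilp_prod {G H : Type*} [Group G] [Group H] {A : Subgroup G} {B : Subgroup H}
    (hA : Group.IsNilpotent A) (hB : Group.IsNilpotent B) :
    Group.IsNilpotent (A.prod B) := by
  haveI := hA; haveI := hB
  exact nilpotent_of_mulEquiv (Subgroup.prodEquiv A B).symm

theorem nilp_zpowers {G : Type*} [Group G] (a : G) : Group.IsNilpotent (Subgroup.zpowers a) := by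
  open scoped IsMulCommutative in infer_instance

-- In a finite nilpotent group, elements of coprime prime-power orders commute.
theorem commute_of_prime_pow_orders {K : Type*} [Group K] [Finite K]
    (hK : Group.IsNilpotent K) {x y : K} {p q : ℕ} (pp : p.Prime) (qp : q.Prime)
    (hpq : p ≠ q) {a b : ℕ} (hx : orderOf x = p ^ a) (hy : orderOf y = q ^ b) :
    Commute x y := by
  haveI : Fact p.Prime := ⟨pp⟩
  haveI : Fact q.Prime := ⟨qp⟩
  haveI := hK
  have hxP : IsPGroup p (Subgroup.zpowers x) := by
    intro g
    obtain ⟨n, hn⟩ := g.2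
    refine ⟨a, ?_⟩
    have : (g : K) ^ (p ^ a) = 1 := by
      rw [← hn, ← zpow_natCast, ← zpow_mul, mul_comm, zpow_mul, zpow_natCast,
        ← hx, pow_orderOf_eq_one, one_zpow]
    ext
    simpa using this
  have hyQ : IsPGroup q (Subgroup.zpowers y) := by
    intro g
    obtain ⟨n, hn⟩ := g.2
    refine ⟨b, ?_⟩
    have : (g : K) ^ (q ^ b) = 1 := by
      rw [← hn, ← zpow_natCast, ← zpow_mul, mul_comm, zpow_mul, zpow_natCast,
        ← hy, pow_orderOf_eq_one, one_zpow]
    ext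
    simpa using this
  obtain ⟨P, hP⟩ := hxP.exists_le_sylow
  obtain ⟨Q, hQ⟩ := hyQ.exists_le_sylow
  have hPn : (P : Subgroup K).Normal := by
    have := (isNilpotent_of_finite_tfae (G := K)).out 0 3
    exact this.mp hK p ‹_› P
  have hQn : (Q : Subgroup K).Normal := by
    have := (isNilpotent_of_finite_tfae (G := K)).out 0 3
    exact this.mp hK q ‹_› Q
  have hdisj : Disjoint (P : Subgroup K) (Q : Subgroup K) := by
    rw [Subgroup.disjoint_def]
    intro g hgP hgQ
    obtain ⟨i, hi⟩ := P.2 ⟨g, hgP⟩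
    obtain ⟨j, hj⟩ := Q.2 ⟨g, hgQ⟩
    have hi' : g ^ (p ^ i) = 1 := by simpa [Subtype.ext_iff] using hi
    have hj' : g ^ (q ^ j) = 1 := by simpa [Subtype.ext_iff] using hj
    have h1 : orderOf g ∣ p ^ i := orderOf_dvd_of_pow_eq_one hi'
    have h2 : orderOf g ∣ q ^ j := orderOf_dvd_of_pow_eq_one hj'
    have hcop : Nat.Coprime (p ^ i) (q ^ j) :=
      Nat.Coprime.pow i j ((Nat.coprime_primes pp qp).mpr hpq)
    have hd : orderOf g ∣ 1 := by
      have h3 := Nat.dvd_gcd h1 h2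
      rwa [Nat.Coprime.gcd_eq_one hcop] at h3
    exact orderOf_eq_one_iff.mp (Nat.eq_one_of_dvd_one hd)
  exact Subgroup.commute_of_normal_of_disjoint _ _ hPn hQn hdisj x y
    (hP (Subgroup.mem_zpowers x)) (hQ (Subgroup.mem_zpowers y))

theorem decomp_coprime {G : Type*} [Group G] [Finite G] (g : G) {d m : ℕ}
    (h : orderOf g = d * m) (hco : Nat.Coprime d m) :
    ∃ u v : G, g = u * v ∧ orderOf u ∣ d ∧ orderOf v ∣ m ∧
      u ∈ Subgroup.zpowers g ∧ v ∈ Subgroup.zpowers g := by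
  obtain ⟨x, y, hxy⟩ := (Nat.isCoprime_iff_coprime.mpr hco)
  refine ⟨g ^ ((m : ℤ) * y), g ^ ((d : ℤ) * x), ?_, ?_, ?_, ⟨_, rfl⟩, ⟨_, rfl⟩⟩
  · have h1 : (m : ℤ) * y + (d : ℤ) * x = 1 := by linear_combination hxy
    calc g = g ^ (1 : ℤ) := (zpow_one g).symm
      _ = g ^ ((m : ℤ) * y + (d : ℤ) * x) := by rw [h1]
      _ = _ := zpow_add g _ _
  · apply orderOf_dvd_of_pow_eq_one
    rw [← zpow_natCast (g ^ ((m : ℤ) * y)) d, ← zpow_mul]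
    have h2 : (m : ℤ) * y * d = (orderOf g : ℤ) * y := by rw [h]; push_cast; ring
    rw [h2, zpow_mul, zpow_natCast, pow_orderOf_eq_one, one_zpow]
  · apply orderOf_dvd_of_pow_eq_one
    rw [← zpow_natCast (g ^ ((d : ℤ) * x)) m, ← zpow_mul]
    have h2 : (d : ℤ) * x * m = (orderOf g : ℤ) * x := by rw [h]; push_cast; ring
    rw [h2, zpow_mul, zpow_natCast, pow_orderOf_eq_one, one_zpow]

theorem mem_closure_primePow {G : Type*} [Group G] [Finite G] (p : ℕ) :
    ∀ n : ℕ, ∀ g : G, orderOf g = n → Nat.Coprime n p →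
      g ∈ Subgroup.closure {g : G | ∃ q : ℕ, q.Prime ∧ q ≠ p ∧ ∃ k, orderOf g = q ^ k} := by
  intro n
  induction n using Nat.strong_induction_on with
  | _ n ih =>
    intro g hg hco
    rcases eq_or_ne n 1 with rfl | hn1
    · have : g = 1 := orderOf_eq_one_iff.mp hg
      rw [this]; exact one_mem _
    have hn0 : n ≠ 0 := hg ▸ (orderOf_pos g).ne'
    set q := n.minFac with hq
    have qp : q.Prime := Nat.minFac_prime hn1
    have hqd : q ∣ n := Nat.minFac_dvd n
    have hqp : q ≠ p := by
      rintro rfl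
      exact qp.one_lt.ne' (Nat.Coprime.eq_one_of_dvd hco.symm hqd)
    set a := n.factorization q with ha
    have hdm : q ^ a * (n / q ^ a) = n := Nat.ordProj_mul_ordCompl_eq_self n q
    have hcodm : Nat.Coprime (q ^ a) (n / q ^ a) :=
      Nat.Coprime.pow_left a ((Nat.coprime_ordCompl qp hn0))
    obtain ⟨u, v, hguv, hu, hv, _, _⟩ := decomp_coprime g (by rw [hg]; exact hdm.symm) hcodm
    have hmlt : n / q ^ a < n := by
      apply Nat.div_lt_self (Nat.pos_of_ne_zero hn0)
      have h1 : 1 ≤ a := (Nat.Prime.factorization_pos_of_dvd qp hn0 hqd)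
      calc 1 < q := qp.one_lt
        _ = q ^ 1 := (pow_one q).symm
        _ ≤ q ^ a := Nat.pow_le_pow_right qp.pos h1
    have humem : u ∈ Subgroup.closure {g : G | ∃ q : ℕ, q.Prime ∧ q ≠ p ∧ ∃ k, orderOf g = q ^ k} := by
      apply Subgroup.subset_closure
      obtain ⟨k, -, hk⟩ := (Nat.dvd_prime_pow qp).mp hu
      exact ⟨q, qp, hqp, k, hk⟩
    have hvmem := ih (orderOf v) (lt_of_le_of_lt (Nat.le_of_dvd (Nat.ordCompl_pos q hn0) hv) hmlt) v rfl
      (Nat.Coprime.coprime_dvd_left (hv.trans (Nat.div_dvd_of_dvd (Nat.ordProj_dvd n q))) hco)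
    rw [hguv]
    exact mul_mem humem hvmem
theorem twoGen_nilpotent_sylow {G : Type*} [Group G] [Finite G]
    (hnil : ∀ x y : G, Group.IsNilpotent (Subgroup.closure ({x, y} : Set G)))
    (p : ℕ) [hp : Fact p.Prime] (P : Sylow p G) : (P : Subgroup G).Normal := by
  rw [← Subgroup.normalizer_eq_top_iff]
  set S : Set G := {g : G | ∃ q : ℕ, q.Prime ∧ q ≠ p ∧ ∃ k, orderOf g = q ^ k} with hS
  set Hs := Subgroup.closure S with hHs
  -- every generator commutes with every element of P
  have hcomm : ∀ g ∈ S, ∀ x ∈ (P : Subgroup G), Commute g x := by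
    rintro g ⟨q, qp, hqp, k, hgk⟩ x hx
    obtain ⟨k0, hk0⟩ := P.2 ⟨x, hx⟩
    obtain ⟨j, -, hj⟩ := (Nat.dvd_prime_pow hp.out).mp (orderOf_dvd_of_pow_eq_one hk0)
    have hxj : orderOf x = p ^ j := by rwa [Subgroup.orderOf_mk] at hj
    -- work in the closure of {g, x}
    set K := Subgroup.closure ({g, x} : Set G) with hK
    have hgK : g ∈ K := Subgroup.subset_closure (by simp)
    have hxK : x ∈ K := Subgroup.subset_closure (by simp)
    have hc : Commute (⟨g, hgK⟩ : K) (⟨x, hxK⟩ : K) := by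
      refine commute_of_prime_pow_orders (hnil g x) qp hp.out hqp (a := k) (b := j) ?_ ?_
      · rw [Subgroup.orderOf_mk]; exact hgk
      · rw [Subgroup.orderOf_mk]; exact hxj
    have := congrArg (Subtype.val) hc
    simpa [Commute, SemiconjBy] using this
  -- Hs normalizes (indeed centralizes) P
  have hHsN : Hs ≤ Subgroup.normalizer ((P : Subgroup G) : Set G) := by
    rw [hHs]
    apply Subgroup.closure_le _ |>.mpr
    intro g hg
    rw [SetLike.mem_coe, Subgroup.mem_normalizer_iff]
    intro h
    constructor
    · intro hh
      have e : g * h * g⁻¹ = h := by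
        rw [(hcomm g hg h hh).eq, mul_assoc, mul_inv_cancel, mul_one]
      rw [e]; exact hh
    · intro hmem
      have e : h = g * h * g⁻¹ := by
        have hc := ((hcomm g hg _ hmem).inv_left).eq
        calc h = g⁻¹ * (g * h * g⁻¹) * g := by group
          _ = (g * h * g⁻¹) * g⁻¹ * g := by rw [hc]
          _ = g * h * g⁻¹ := by group
      exact e ▸ hmem
  have hHnormal : Hs.Normal := by
    constructor
    intro n hn g
    have hmap : Hs.map (MulAut.conj g).toMonoidHom ≤ Hs := by
      rw [hHs, MonoidHom.map_closure]
      apply Subgroup.closure_mono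
      rintro - ⟨x, ⟨q, qp, hqp, k, hk⟩, rfl⟩
      refine ⟨q, qp, hqp, k, ?_⟩
      rw [orderOf_injective (MulAut.conj g).toMonoidHom (MulAut.conj g).injective x]
      exact hk
    exact hmap ⟨n, hn, rfl⟩
  haveI := hHnormal
  have hq : IsPGroup p (G ⧸ Hs) := by
    intro gq
    induction gq using QuotientGroup.induction_on with
    | _ x =>
      have hn0 : orderOf x ≠ 0 := (orderOf_pos x).ne'
      refine ⟨(orderOf x).factorization p, ?_⟩
      rw [show ((x : G ⧸ Hs)) ^ p ^ (orderOf x).factorization p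
        = ((x ^ p ^ (orderOf x).factorization p : G) : G ⧸ Hs) from rfl,
        QuotientGroup.eq_one_iff]
      have hord : orderOf (x ^ p ^ (orderOf x).factorization p) =
          orderOf x / p ^ (orderOf x).factorization p := by
        rw [orderOf_pow, Nat.gcd_eq_right (Nat.ordProj_dvd _ _)]
      exact mem_closure_primePow p _ _ rfl
        (by rw [hord]; exact (Nat.coprime_ordCompl hp.out hn0).symm)
  obtain ⟨m, hm⟩ := hq.exists_card_eq
  have hidx : Hs.index = p ^ m := by rw [Subgroup.index_eq_card]; exact hm
  set Kk := (P : Subgroup G) ⊔ Hs with hKk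
  have h1 : Kk.index ∣ p ^ m := hidx ▸ Subgroup.index_dvd_of_le le_sup_right
  have h2 : Kk.index ∣ (P : Subgroup G).index := Subgroup.index_dvd_of_le le_sup_left
  have hpne : ¬ p ∣ Kk.index := fun hd => P.not_dvd_index' Subgroup.index_ne_zero_of_finite (hd.trans h2)
  have hKtop : Kk = ⊤ := by
    rw [← Subgroup.index_eq_one]
    obtain ⟨j, hjm, hj⟩ := (Nat.dvd_prime_pow hp.out).mp h1
    rcases Nat.eq_zero_or_pos j with rfl | hj0
    · simpa using hj
    · exact absurd (hj ▸ dvd_pow_self p hj0.ne') hpne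
  rw [eq_top_iff, ← hKtop]
  exact sup_le Subgroup.le_normalizer hHsN

theorem nilpotent_of_twoGen {G : Type*} [Group G] [Finite G]
    (h : ∀ x y : G, Group.IsNilpotent (Subgroup.closure ({x, y} : Set G))) :
    Group.IsNilpotent G :=
  ((isNilpotent_of_finite_tfae (G := G)).out 3 0).mp
    (fun p hp P => @twoGen_nilpotent_sylow G _ _ h p hp P)

section Main
variable {G H : Type*} [Group G] [Group H]

theorem nilp_pair_closure (x y : G × H) (s : G) (t : H)
    (hx1 : x.1 ∈ Subgroup.zpowers s) (hx2 : x.2 ∈ Subgroup.zpowers t)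
    (hy1 : y.1 ∈ Subgroup.zpowers s) (hy2 : y.2 ∈ Subgroup.zpowers t) :
    Group.IsNilpotent (Subgroup.closure ({x, y} : Set (G × H))) := by
  refine nilp_of_le ?_ (nilp_prod (nilp_zpowers s) (nilp_zpowers t))
  rw [Subgroup.closure_le]
  rintro z (rfl | rfl)
  · exact Subgroup.mem_prod.mpr ⟨hx1, hx2⟩
  · exact Subgroup.mem_prod.mpr ⟨hy1, hy2⟩

theorem mem_nilpotentizer_prod {a : G} {b : H} (ha : a ∈ nilpotentizer G)
    (hb : b ∈ nilpotentizer H) : (a, b) ∈ nilpotentizer (G × H) := by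
  rintro ⟨g, h⟩
  refine nilp_of_le ?_ (nilp_prod (ha g) (hb h))
  rw [Subgroup.closure_le]
  rintro z (rfl | rfl)
  · exact Subgroup.mem_prod.mpr ⟨Subgroup.subset_closure (by simp), Subgroup.subset_closure (by simp)⟩
  · exact Subgroup.mem_prod.mpr ⟨Subgroup.subset_closure (by simp), Subgroup.subset_closure (by simp)⟩

theorem not_mem_nilpotentizer_inl {a : G} (ha : a ∉ nilpotentizer G) :
    ((a, 1) : G × H) ∉ nilpotentizer (G × H) := by
  intro hmem
  apply ha
  intro g
  have h1 := hmem (g, 1)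
  have he : Subgroup.closure ({((a, 1) : G × H), (g, 1)} : Set (G × H)) =
      (Subgroup.closure ({a, g} : Set G)).map (MonoidHom.inl G H) := by
    rw [MonoidHom.map_closure]
    congr 1
    rw [Set.image_insert_eq, Set.image_singleton]
    rfl
  rw [he] at h1
  haveI := h1
  exact nilpotent_of_mulEquiv
    (Subgroup.equivMapOfInjective _ (MonoidHom.inl G H) (fun a b h => (Prod.ext_iff.mp h).1)).symm

theorem not_mem_nilpotentizer_inr {b : H} (hb : b ∉ nilpotentizer H) :
    ((1, b) : G × H) ∉ nilpotentizer (G × H) := by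
  intro hmem
  apply hb
  intro h
  have h1 := hmem (1, h)
  have he : Subgroup.closure ({((1, b) : G × H), (1, h)} : Set (G × H)) =
      (Subgroup.closure ({b, h} : Set H)).map (MonoidHom.inr G H) := by
    rw [MonoidHom.map_closure]
    congr 1
    rw [Set.image_insert_eq, Set.image_singleton]
    rfl
  rw [he] at h1
  haveI := h1
  exact nilpotent_of_mulEquiv
    (Subgroup.equivMapOfInjective _ (MonoidHom.inr G H) (fun a b h => (Prod.ext_iff.mp h).2)).symm

theorem ne_one_of_not_mem_nilpotentizer {a : G} (ha : a ∉ nilpotentizer G) : a ≠ 1 := by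
  rintro rfl
  apply ha
  intro h
  refine nilp_of_le ?_ (nilp_zpowers h)
  rw [Subgroup.closure_le]
  rintro z (rfl | rfl)
  · exact Subgroup.one_mem _
  · exact Subgroup.mem_zpowers _

theorem exists_not_mem_nilpotentizer [Finite G] (hG : ¬ Group.IsNilpotent G) :
    ∃ a : G, a ∉ nilpotentizer G := by
  by_contra hcon
  push_neg at hcon
  exact hG (nilpotent_of_twoGen fun x y => hcon x y)

end Main

theorem nilpotentGraph_prod_connected {G H : Type*} [Group G] [Group H] [Finite G] [Finite H]
    (hG : ¬ Group.IsNilpotent G) (hH : ¬ Group.IsNilpotent H) :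
    (nilpotentGraph (G × H)).Connected := by
  obtain ⟨x₀, hx₀⟩ := exists_not_mem_nilpotentizer hG
  obtain ⟨y₀, hy₀⟩ := exists_not_mem_nilpotentizer hH
  set W : {x : G × H // x ∉ nilpotentizer (G × H)} := ⟨(x₀, 1), not_mem_nilpotentizer_inl hx₀⟩
  set w : {x : G × H // x ∉ nilpotentizer (G × H)} := ⟨(1, y₀), not_mem_nilpotentizer_inr hy₀⟩
  have hWw : (nilpotentGraph (G × H)).Adj w W := by
    refine ⟨?_, nilp_pair_closure _ _ x₀ y₀ (Subgroup.one_mem _) (Subgroup.mem_zpowers _)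
      (Subgroup.mem_zpowers _) (Subgroup.one_mem _)⟩
    intro he
    apply ne_one_of_not_mem_nilpotentizer hx₀
    have := congrArg Prod.fst (Subtype.ext_iff.mp he)
    simpa using this.symm
  have key : ∀ u : {x : G × H // x ∉ nilpotentizer (G × H)},
      (nilpotentGraph (G × H)).Reachable u W := by
    rintro ⟨⟨a, b⟩, hu⟩
    have hab : a ∉ nilpotentizer G ∨ b ∉ nilpotentizer H := by
      by_contra hcon
      push_neg at hcon
      exact hu (mem_nilpotentizer_prod hcon.1 hcon.2)
    rcases hab with ha | hb
    · set u' : {x : G × H // x ∉ nilpotentizer (G × H)} :=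
        ⟨(a, 1), not_mem_nilpotentizer_inl ha⟩
      have h1 : (nilpotentGraph (G × H)).Reachable ⟨(a, b), hu⟩ u' := by
        rcases eq_or_ne b 1 with rfl | hb1
        · exact SimpleGraph.Reachable.refl _
        · refine SimpleGraph.Adj.reachable ⟨?_, nilp_pair_closure _ _ a b
            (Subgroup.mem_zpowers _) (Subgroup.mem_zpowers _)
            (Subgroup.mem_zpowers _) (Subgroup.one_mem _)⟩
          intro he
          exact hb1 (congrArg Prod.snd (Subtype.ext_iff.mp he))
      have h2 : (nilpotentGraph (G × H)).Adj u' w := by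
        refine ⟨?_, nilp_pair_closure _ _ a y₀ (Subgroup.mem_zpowers _) (Subgroup.one_mem _)
          (Subgroup.one_mem _) (Subgroup.mem_zpowers _)⟩
        intro he
        apply ne_one_of_not_mem_nilpotentizer ha
        exact congrArg Prod.fst (Subtype.ext_iff.mp he)
      exact h1.trans (h2.reachable.trans hWw.reachable)
    · set u' : {x : G × H // x ∉ nilpotentizer (G × H)} :=
        ⟨(1, b), not_mem_nilpotentizer_inr hb⟩
      have h1 : (nilpotentGraph (G × H)).Reachable ⟨(a, b), hu⟩ u' := by
        rcases eq_or_ne a 1 with rfl | ha1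
        · exact SimpleGraph.Reachable.refl _
        · refine SimpleGraph.Adj.reachable ⟨?_, nilp_pair_closure _ _ a b
            (Subgroup.mem_zpowers _) (Subgroup.mem_zpowers _)
            (Subgroup.one_mem _) (Subgroup.mem_zpowers _)⟩
          intro he
          exact ha1 (congrArg Prod.fst (Subtype.ext_iff.mp he))
      have h2 : (nilpotentGraph (G × H)).Adj u' W := by
        refine ⟨?_, nilp_pair_closure _ _ x₀ b (Subgroup.one_mem _) (Subgroup.mem_zpowers _)
          (Subgroup.mem_zpowers _) (Subgroup.one_mem _)⟩
        intro he
        apply ne_one_of_not_mem_nilpotentizer hx₀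
        have := congrArg Prod.fst (Subtype.ext_iff.mp he)
        simpa using this.symm
      exact h1.trans h2.reachable
  haveI : Nonempty {x : G × H // x ∉ nilpotentizer (G × H)} := ⟨W⟩
  exact ⟨fun u v => (key u).trans (key v).symm⟩
end

section
/- Let G be a finite non-nilpotent group and H a finite nilpotent group. Then the number of connected components of the nilpotent graph of G × H equals the number of connected components of the nilpotent graph of G. In particular, the nilpotent graph of G is connected iff the nilpotent graph of G × H is connected. -/
section Aux

variable {G H : Type*} [Group G] [Group H]

lemma nilpotent_of_le' {K P : Subgroup G} (h : K ≤ P)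
    (hP : Group.IsNilpotent P) : Group.IsNilpotent K := by
  haveI := hP
  exact nilpotent_of_mulEquiv (Subgroup.subgroupOfEquivOfLe h)

lemma key_iff (hH : Group.IsNilpotent H) (v w : G × H) :
    Group.IsNilpotent (Subgroup.closure ({v, w} : Set (G × H))) ↔
      Group.IsNilpotent (Subgroup.closure ({v.1, w.1} : Set G)) := by
  constructor
  · intro h
    have hmap : Subgroup.map (MonoidHom.fst G H) (Subgroup.closure {v, w}) =
        Subgroup.closure ({v.1, w.1} : Set G) := by
      rw [MonoidHom.map_closure]
      congr 1
      simp [Set.image_insert_eq]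
    haveI := h
    have := nilpotent_of_surjective ((MonoidHom.fst G H).subgroupMap (Subgroup.closure {v, w}))
      (MonoidHom.subgroupMap_surjective _ _)
    rwa [hmap] at this
  · intro h
    have hle : Subgroup.closure ({v, w} : Set (G × H)) ≤
        (Subgroup.closure ({v.1, w.1} : Set G)).prod (Subgroup.closure ({v.2, w.2} : Set H)) := by
      rw [Subgroup.closure_le]
      rintro x (rfl | rfl) <;>
        exact Subgroup.mem_prod.mpr
          ⟨Subgroup.subset_closure (by simp), Subgroup.subset_closure (by simp)⟩
    refine nilpotent_of_le' hle ?_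
    haveI := h
    haveI := hH
    exact nilpotent_of_mulEquiv (Subgroup.prodEquiv _ _).symm

lemma mem_nilpotentizer_prod_iff (hH : Group.IsNilpotent H) (v : G × H) :
    v ∈ nilpotentizer (G × H) ↔ v.1 ∈ nilpotentizer G := by
  constructor
  · intro h g'
    have := h (g', v.2)
    rwa [key_iff hH] at this
  · intro h w
    rw [key_iff hH]
    exact h w.1

/-- map on vertices -/
def vmap (hH : Group.IsNilpotent H) (v : {x : G × H // x ∉ nilpotentizer (G × H)}) :
    {x : G // x ∉ nilpotentizer G} :=
  ⟨v.1.1, fun h => v.2 ((mem_nilpotentizer_prod_iff hH v.1).mpr h)⟩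

/-- inverse direction on vertices -/
def vinv (hH : Group.IsNilpotent H) (g : {x : G // x ∉ nilpotentizer G}) :
    {x : G × H // x ∉ nilpotentizer (G × H)} :=
  ⟨(g.1, 1), fun h => g.2 ((mem_nilpotentizer_prod_iff hH (g.1, 1)).mp h)⟩

lemma reachable_of_fst_eq (hH : Group.IsNilpotent H)
    {v w : {x : G × H // x ∉ nilpotentizer (G × H)}} (h : v.1.1 = w.1.1) :
    (nilpotentGraph (G × H)).Reachable v w := by
  by_cases hvw : v = w
  · rw [hvw]
  · refine SimpleGraph.Adj.reachable ⟨hvw, ?_⟩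
    rw [key_iff hH, h, Set.pair_eq_singleton, ← Subgroup.zpowers_eq_closure]
    open scoped IsMulCommutative in infer_instance

lemma reachable_forward (hH : Group.IsNilpotent H)
    {v w : {x : G × H // x ∉ nilpotentizer (G × H)}}
    (h : (nilpotentGraph (G × H)).Reachable v w) :
    (nilpotentGraph G).Reachable (vmap hH v) (vmap hH w) := by
  obtain ⟨p⟩ := h
  induction p with
  | nil => rfl
  | @cons a b c hab p ih =>
    obtain ⟨hne, hnil⟩ := hab
    rw [key_iff hH] at hnil
    by_cases heq : (a.1).1 = (b.1).1
    · have hab' : vmap hH a = vmap hH b := Subtype.ext heq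
      rw [hab']; exact ih
    · exact ((show (nilpotentGraph G).Adj (vmap hH a) (vmap hH b) from
        ⟨fun e => heq (congrArg Subtype.val e), hnil⟩).reachable).trans ih

lemma reachable_backward_aux (hH : Group.IsNilpotent H)
    {a b : {x : G // x ∉ nilpotentizer G}} (w : (nilpotentGraph G).Walk a b) :
    ∀ p q : {x : G × H // x ∉ nilpotentizer (G × H)}, p.1.1 = a.1 → q.1.1 = b.1 →
      (nilpotentGraph (G × H)).Reachable p q := by
  induction w with
  | nil => exact fun p q hp hq => reachable_of_fst_eq hH (hp.trans hq.symm)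
  | @cons a b c hab w ih =>
    intro p q hp hq
    have hb : (b.1, p.1.2) ∉ nilpotentizer (G × H) :=
      fun h => b.2 ((mem_nilpotentizer_prod_iff hH (b.1, p.1.2)).mp h)
    refine SimpleGraph.Reachable.trans
      (show (nilpotentGraph (G × H)).Adj p ⟨(b.1, p.1.2), hb⟩ from ?_).reachable
      (ih ⟨(b.1, p.1.2), hb⟩ q rfl hq)
    refine ⟨?_, ?_⟩
    · intro e
      apply hab.1
      apply Subtype.ext
      rw [← hp]
      exact congrArg (fun x => x.1.1) e
    · rw [key_iff hH]
      rw [show ((p : G × H)).1 = ((a : G)) from hp]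
      exact hab.2

lemma reachable_backward (hH : Group.IsNilpotent H)
    {p q : {x : G × H // x ∉ nilpotentizer (G × H)}}
    (h : (nilpotentGraph G).Reachable (vmap hH p) (vmap hH q)) :
    (nilpotentGraph (G × H)).Reachable p q := by
  obtain ⟨w⟩ := h
  exact reachable_backward_aux hH w p q rfl rfl

/-- The equivalence between connected components. -/
noncomputable def compEquiv (hH : Group.IsNilpotent H) :
    (nilpotentGraph (G × H)).ConnectedComponent ≃ (nilpotentGraph G).ConnectedComponent where
  toFun := SimpleGraph.ConnectedComponent.lift
    (fun v => (nilpotentGraph G).connectedComponentMk (vmap hH v))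
    (fun v w p _ => SimpleGraph.ConnectedComponent.eq.mpr (reachable_forward hH ⟨p⟩))
  invFun := SimpleGraph.ConnectedComponent.lift
    (fun g => (nilpotentGraph (G × H)).connectedComponentMk (vinv hH g))
    (fun v w p _ => SimpleGraph.ConnectedComponent.eq.mpr
      (reachable_backward_aux hH p (vinv hH v) (vinv hH w) rfl rfl))
  left_inv := by
    refine SimpleGraph.ConnectedComponent.ind fun v => ?_
    exact SimpleGraph.ConnectedComponent.eq.mpr (reachable_of_fst_eq hH rfl)
  right_inv := by
    refine SimpleGraph.ConnectedComponent.ind fun g => ?_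
    exact congrArg _ (Subtype.ext rfl)

lemma connected_iff_card_components_eq_one {V : Type*} (Γ : SimpleGraph V) :
    Γ.Connected ↔ Nat.card Γ.ConnectedComponent = 1 := by
  rw [Nat.card_eq_one_iff_unique]
  constructor
  · intro h
    haveI : Nonempty V := h.nonempty
    refine ⟨⟨fun a b => ?_⟩, ⟨Γ.connectedComponentMk Classical.ofNonempty⟩⟩
    obtain ⟨v, rfl⟩ := a.exists_rep
    obtain ⟨w, rfl⟩ := b.exists_rep
    exact SimpleGraph.ConnectedComponent.eq.mpr (h.preconnected v w)
  · rintro ⟨hsub, ⟨c⟩⟩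
    obtain ⟨v, rfl⟩ := c.exists_rep
    rw [SimpleGraph.connected_iff]
    exact ⟨fun u w => SimpleGraph.ConnectedComponent.eq.mp (hsub.allEq _ _), ⟨v⟩⟩

end Aux

theorem nilpotentGraph_card_components_prod_nilpotent {G H : Type*} [Group G] [Group H]
    [Finite G] [Finite H] (hG : ¬ Group.IsNilpotent G) (hH : Group.IsNilpotent H) :
    Nat.card ((nilpotentGraph (G × H)).ConnectedComponent) =
      Nat.card ((nilpotentGraph G).ConnectedComponent) ∧
    ((nilpotentGraph G).Connected ↔ (nilpotentGraph (G × H)).Connected) := by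
  have hcard : Nat.card ((nilpotentGraph (G × H)).ConnectedComponent) =
      Nat.card ((nilpotentGraph G).ConnectedComponent) := Nat.card_congr (compEquiv hH)
  refine ⟨hcard, ?_⟩
  rw [connected_iff_card_components_eq_one, connected_iff_card_components_eq_one, hcard]
end

section
/- Let G be a finite non-nilpotent group and H a finite nilpotent group. Then |H| divides the number of vertices of each connected component of the nilpotent graph of G × H. -/
open Subgroup in
lemma aux_nilp_closure_singleton {G : Type*} [Group G] (g : G) :
    Group.IsNilpotent (closure ({g} : Set G)) := by
  rw [← Subgroup.zpowers_eq_closure]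
  open scoped IsMulCommutative in infer_instance

open Subgroup in
lemma aux_nilp_pair_prod {G H : Type*} [Group G] [Group H] (hH : Group.IsNilpotent H)
    (p q : G × H) :
    Group.IsNilpotent (closure ({p, q} : Set (G × H))) ↔
      Group.IsNilpotent (closure ({p.1, q.1} : Set G)) := by
  constructor
  · intro hK
    have hmap : (closure ({p, q} : Set (G × H))).map (MonoidHom.fst G H)
        = closure ({p.1, q.1} : Set G) := by
      rw [MonoidHom.map_closure, Set.image_pair]
      rfl
    have := nilpotent_of_surjective ((MonoidHom.fst G H).subgroupMap _)
      ((MonoidHom.fst G H).subgroupMap_surjective (closure ({p, q} : Set (G × H))))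
    rw [hmap] at this
    exact this
  · intro hx
    haveI : Group.IsNilpotent H := hH
    haveI : Group.IsNilpotent (closure ({p.1, q.1} : Set G)) := hx
    haveI : Group.IsNilpotent ((closure ({p.1, q.1} : Set G)).prod (⊤ : Subgroup H)) :=
      nilpotent_of_mulEquiv (Subgroup.prodEquiv _ _).symm
    have hle : closure ({p, q} : Set (G × H)) ≤ (closure ({p.1, q.1} : Set G)).prod ⊤ := by
      rw [closure_le]
      rintro r (rfl | rfl)
      · exact ⟨subset_closure (by simp), trivial⟩
      · exact ⟨subset_closure (by simp), trivial⟩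
    exact nilpotent_of_mulEquiv (Subgroup.subgroupOfEquivOfLe hle)

lemma aux_mem_nilpotentizer_prod {G H : Type*} [Group G] [Group H]
    (hH : Group.IsNilpotent H) (p : G × H) :
    p ∈ nilpotentizer (G × H) ↔ p.1 ∈ nilpotentizer G := by
  constructor
  · intro hp x
    have := hp (x, 1)
    rwa [aux_nilp_pair_prod hH] at this
  · intro hp q
    rw [aux_nilp_pair_prod hH]
    exact hp q.1

lemma aux_mk_eq {G H : Type*} [Group G] [Group H] (hH : Group.IsNilpotent H)
    (v w : {x : G × H // x ∉ nilpotentizer (G × H)}) (hfst : (v : G × H).1 = (w : G × H).1) :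
    (nilpotentGraph (G × H)).connectedComponentMk v
      = (nilpotentGraph (G × H)).connectedComponentMk w := by
  rcases eq_or_ne v w with rfl | hne
  · rfl
  · refine SimpleGraph.ConnectedComponent.sound (SimpleGraph.Adj.reachable (show v ≠ w ∧ Group.IsNilpotent (Subgroup.closure ({(v : G × H), (w : G × H)} : Set (G × H))) from ⟨hne, ?_⟩))
    rw [aux_nilp_pair_prod hH, hfst, Set.pair_eq_singleton]
    exact aux_nilp_closure_singleton _

theorem card_dvd_component_card_prod_nilpotent {G H : Type*} [Group G] [Group H]
    [Finite G] [Finite H] (hG : ¬ Group.IsNilpotent G) (hH : Group.IsNilpotent H)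
    (C : (nilpotentGraph (G × H)).ConnectedComponent) :
    Nat.card H ∣ C.supp.ncard := by
  classical
  set S : Set G := {g | ∃ hg : (g, (1 : H)) ∉ nilpotentizer (G × H),
    (nilpotentGraph (G × H)).connectedComponentMk ⟨(g, 1), hg⟩ = C} with hS
  have hvert : ∀ (g : G) (h : H), (g, h) ∉ nilpotentizer (G × H) →
      (g, (1 : H)) ∉ nilpotentizer (G × H) := by
    intro g h hv hc
    exact hv ((aux_mem_nilpotentizer_prod hH (g, h)).mpr
      ((aux_mem_nilpotentizer_prod hH (g, 1)).mp hc))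
  let f : C.supp → S × H := fun v =>
    (⟨(v.1 : G × H).1, by
      have hv := v.1.2
      have hg : ((v.1 : G × H).1, (1 : H)) ∉ nilpotentizer (G × H) := hvert _ _ (by
        have : ((v.1 : G × H).1, (v.1 : G × H).2) = (v.1 : G × H) := rfl
        rw [this]; exact hv)
      refine ⟨hg, ?_⟩
      have hc : (nilpotentGraph (G × H)).connectedComponentMk v.1 = C :=
        (SimpleGraph.ConnectedComponent.mem_supp_iff _ _).mp v.2
      exact (aux_mk_eq hH ⟨((v.1 : G × H).1, 1), hg⟩ v.1 rfl).trans hc⟩, (v.1 : G × H).2)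
  have hbij : Function.Bijective f := by
    constructor
    · rintro ⟨⟨⟨g₁, h₁⟩, hv₁⟩, hc₁⟩ ⟨⟨⟨g₂, h₂⟩, hv₂⟩, hc₂⟩ heq
      have hg : g₁ = g₂ := congrArg (fun p => (p.1 : G)) heq
      have hh : h₁ = h₂ := congrArg Prod.snd heq
      apply Subtype.ext
      apply Subtype.ext
      exact Prod.ext hg hh
    · rintro ⟨⟨g, hg, hcomp⟩, h⟩
      have hv : (g, h) ∉ nilpotentizer (G × H) := by
        intro hc
        exact hg ((aux_mem_nilpotentizer_prod hH (g, 1)).mpr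
          ((aux_mem_nilpotentizer_prod hH (g, h)).mp hc))
      refine ⟨⟨⟨(g, h), hv⟩, ?_⟩, Prod.ext (Subtype.ext rfl) rfl⟩
      rw [SimpleGraph.ConnectedComponent.mem_supp_iff]
      exact (aux_mk_eq hH ⟨(g, h), hv⟩ ⟨(g, 1), hg⟩ rfl).trans hcomp
  have hcard : C.supp.ncard = Nat.card S * Nat.card H := by
    rw [← Nat.card_coe_set_eq, Nat.card_congr (Equiv.ofBijective f hbij), Nat.card_prod]
  rw [hcard]
  exact Dvd.intro_left _ rfl
end

section
/- Let G be a finite non-nilpotent group. The nilpotent graph of G is isomorphic (as a graph) to the nilpotent graph of (G/Z*(G)) × Z*(G). -/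
section AuxLemmas

open Subgroup QuotientGroup


section Aux

variable {G : Type*} [Group G]

lemma ucs_succ_congr {a : ℕ} (h : Subgroup.upperCentralSeries G a = Subgroup.upperCentralSeries G (a + 1)) :
    Subgroup.upperCentralSeries G (a + 1) = Subgroup.upperCentralSeries G (a + 2) := by
  have e1 : ∀ x : G, x ∈ Subgroup.upperCentralSeries G (a + 1) ↔
      ∀ y, x * y * x⁻¹ * y⁻¹ ∈ Subgroup.upperCentralSeries G a := fun _ => Subgroup.mem_upperCentralSeries_succ_iff
  have e2 : ∀ x : G, x ∈ Subgroup.upperCentralSeries G (a + 2) ↔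
      ∀ y, x * y * x⁻¹ * y⁻¹ ∈ Subgroup.upperCentralSeries G (a + 1) :=
    fun _ => Subgroup.mem_upperCentralSeries_succ_iff
  ext x
  rw [e1, e2, h]

lemma ucs_stable_of {a : ℕ} (h : Subgroup.upperCentralSeries G a = Subgroup.upperCentralSeries G (a + 1)) :
    ∀ j, Subgroup.upperCentralSeries G (a + j) = Subgroup.upperCentralSeries G a ∧
      Subgroup.upperCentralSeries G (a + j) = Subgroup.upperCentralSeries G (a + j + 1)
  | 0 => ⟨rfl, h⟩
  | j + 1 => by
    obtain ⟨e1, e2⟩ := ucs_stable_of h j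
    exact ⟨e2.symm.trans e1, ucs_succ_congr e2⟩

lemma card_lt_of_lt [Finite G] {H K : Subgroup G} (h : H < K) : Nat.card H < Nat.card K := by
  have h' : (H : Set G) ⊂ (K : Set G) := by exact_mod_cast h
  have := Set.ncard_lt_ncard h' (Set.toFinite _)
  simpa [← Nat.card_coe_set_eq] using this

lemma ucs_growth [Finite G] :
    ∀ n, (∀ k < n, Subgroup.upperCentralSeries G k ≠ Subgroup.upperCentralSeries G (k + 1)) →
      n + 1 ≤ Nat.card (Subgroup.upperCentralSeries G n)
  | 0, _ => Nat.card_pos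
  | n + 1, hstrict => by
    have h1 := ucs_growth n (fun k hk => hstrict k (hk.trans (Nat.lt_succ_self n)))
    have hlt : Subgroup.upperCentralSeries G n < Subgroup.upperCentralSeries G (n + 1) :=
      lt_of_le_of_ne (Subgroup.upperCentralSeries_mono G (Nat.le_succ n)) (hstrict n (Nat.lt_succ_self n))
    have := card_lt_of_lt hlt
    omega

lemma ucs_stab [Finite G] {m : ℕ} (hm : Nat.card G ≤ m) :
    Subgroup.upperCentralSeries G m = Subgroup.upperCentralSeries G (m + 1) := by
  by_cases hall : ∀ k < Nat.card G + 1, Subgroup.upperCentralSeries G k ≠ Subgroup.upperCentralSeries G (k + 1)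
  · exfalso
    have h1 := ucs_growth (Nat.card G + 1) hall
    have h2 : Nat.card (Subgroup.upperCentralSeries G (Nat.card G + 1)) ≤ Nat.card G :=
      Subgroup.card_le_card_group _
    omega
  · push_neg at hall
    obtain ⟨k, hk, heq⟩ := hall
    have hkm : k ≤ m := le_trans (Nat.lt_succ_iff.mp hk) hm
    have e1 := (ucs_stable_of heq (m - k)).1
    have e2 := (ucs_stable_of heq (m - k)).2
    rw [Nat.add_sub_cancel' hkm] at e1 e2
    exact e2

lemma ucs_eq_bot_of_center_bot {H : Type*} [Group H] (hc : Subgroup.center H = ⊥) :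
    ∀ m, Subgroup.upperCentralSeries H m = ⊥
  | 0 => rfl
  | m + 1 => by
    ext x
    rw [Subgroup.mem_upperCentralSeries_succ_iff]
    simp only [ucs_eq_bot_of_center_bot hc m, Subgroup.mem_bot]
    constructor
    · intro hx
      have hxc : x ∈ Subgroup.center H := Subgroup.mem_center_iff.mpr (fun g => by
        have h1 := hx g
        rw [commutatorElement_def, mul_inv_eq_one, mul_inv_eq_iff_eq_mul] at h1
        exact h1.symm)
      rw [hc] at hxc
      exact Subgroup.mem_bot.mp hxc
    · rintro rfl y
      group

lemma nilpotent_of_quotient_ucs [Finite G] {n : ℕ} (hn : Nat.card G ≤ n)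
    (h : Group.IsNilpotent (G ⧸ Subgroup.upperCentralSeries G n)) : Group.IsNilpotent G := by
  set N := Subgroup.upperCentralSeries G n with hN
  have hstep : Subgroup.upperCentralSeries G (n + 1) = N := (ucs_stab hn).symm
  have hcomap : Subgroup.comap (QuotientGroup.mk' N) (Subgroup.center (G ⧸ N)) = N := by
    rw [← Subgroup.upperCentralSeriesStep_eq_comap_center]
    exact hstep
  have hc : Subgroup.center (G ⧸ N) = ⊥ := by
    apply Subgroup.comap_injective (QuotientGroup.mk'_surjective N)
    rw [hcomap, MonoidHom.comap_bot, QuotientGroup.ker_mk']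
  obtain ⟨m, hm⟩ := h.nilpotent
  have hbot : (⊤ : Subgroup (G ⧸ N)) = ⊥ := hm ▸ ucs_eq_bot_of_center_bot hc m
  have hNtop : N = ⊤ := by
    rw [eq_top_iff]
    intro x _
    have h1 : (x : G ⧸ N) ∈ (⊥ : Subgroup (G ⧸ N)) := hbot ▸ Subgroup.mem_top _
    exact (QuotientGroup.eq_one_iff x).mp (Subgroup.mem_bot.mp h1)
  exact ⟨⟨n, hNtop⟩⟩

lemma ucs_subgroupOf_le (H : Subgroup G) : ∀ i,
    (Subgroup.upperCentralSeries G i).subgroupOf H ≤ Subgroup.upperCentralSeries H i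
  | 0 => by
    intro x hx
    rw [Subgroup.mem_subgroupOf] at hx
    exact Subgroup.mem_bot.mpr (Subtype.ext (Subgroup.mem_bot.mp hx))
  | i + 1 => by
    intro x hx
    rw [Subgroup.mem_subgroupOf] at hx
    rw [Subgroup.mem_upperCentralSeries_succ_iff]
    intro y
    apply ucs_subgroupOf_le H i
    rw [Subgroup.mem_subgroupOf]
    exact Subgroup.mem_upperCentralSeries_succ_iff.mp hx (y : G)



lemma hypercenter_nilpotent [Finite G] : Group.IsNilpotent (hypercenter G) := by
  refine ⟨⟨Nat.card G, ?_⟩⟩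
  rw [eq_top_iff]
  intro x _
  apply ucs_subgroupOf_le (hypercenter G) (Nat.card G)
  rw [Subgroup.mem_subgroupOf]
  exact x.2

lemma closure_pair_mk_iff [Finite G] (g h : G) :
    Group.IsNilpotent (Subgroup.closure
      ({(g : G ⧸ hypercenter G), (h : G ⧸ hypercenter G)} : Set (G ⧸ hypercenter G))) ↔
    Group.IsNilpotent (Subgroup.closure ({g, h} : Set G)) := by
  constructor
  · intro hq
    set K : Subgroup G := Subgroup.closure {g, h} ⊔ hypercenter G with hK
    set f : K →* G ⧸ hypercenter G := (QuotientGroup.mk' (hypercenter G)).comp K.subtype with hf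
    have hrange : f.range = Subgroup.closure
        {(g : G ⧸ hypercenter G), (h : G ⧸ hypercenter G)} := by
      rw [hf, MonoidHom.range_comp, Subgroup.range_subtype, hK, Subgroup.map_sup,
        MonoidHom.map_closure, Set.image_pair]
      have h2 : Subgroup.map (QuotientGroup.mk' (hypercenter G)) (hypercenter G) = ⊥ :=
        (Subgroup.map_eq_bot_iff _).mpr (le_of_eq (QuotientGroup.ker_mk' _).symm)
      rw [h2, sup_bot_eq]
      simp [QuotientGroup.coe_mk']
    have hker : f.ker = (hypercenter G).subgroupOf K := by
      rw [hf, ← MonoidHom.comap_ker, QuotientGroup.ker_mk']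
      rfl
    have hrn : Group.IsNilpotent f.range := by rw [hrange]; exact hq
    have hqn : Group.IsNilpotent (K ⧸ f.ker) :=
      nilpotent_of_mulEquiv (QuotientGroup.quotientKerEquivRange f).symm
    have hkerle : f.ker ≤ Subgroup.upperCentralSeries K (Nat.card G) := by
      rw [hker]; exact ucs_subgroupOf_le K (Nat.card G)
    have hsurj : Function.Surjective
        (QuotientGroup.map f.ker (Subgroup.upperCentralSeries K (Nat.card G)) (MonoidHom.id K)
          (by simpa using hkerle)) := by
      intro q
      obtain ⟨k, rfl⟩ := QuotientGroup.mk_surjective q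
      exact ⟨QuotientGroup.mk k, rfl⟩
    have h5 : Group.IsNilpotent (K ⧸ Subgroup.upperCentralSeries K (Nat.card G)) :=
      nilpotent_of_surjective _ hsurj
    have h6 : Group.IsNilpotent K :=
      nilpotent_of_quotient_ucs (Subgroup.card_le_card_group K) h5
    exact nilpotent_of_mulEquiv
      (Subgroup.subgroupOfEquivOfLe (le_sup_left : Subgroup.closure {g, h} ≤ K))
  · intro hn
    haveI := hn
    have := nilpotent_of_surjective
      ((QuotientGroup.mk' (hypercenter G)).subgroupMap (Subgroup.closure {g, h}))
      (MonoidHom.subgroupMap_surjective _ _)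
    rw [MonoidHom.map_closure, Set.image_pair] at this
    exact this

lemma closure_pair_prod_iff {A B : Type*} [Group A] [Group B] (hB : Group.IsNilpotent B)
    (a b : A) (z w : B) :
    Group.IsNilpotent (Subgroup.closure ({(a, z), (b, w)} : Set (A × B))) ↔
    Group.IsNilpotent (Subgroup.closure ({a, b} : Set A)) := by
  constructor
  · intro hc
    haveI := hc
    have := nilpotent_of_surjective
      ((MonoidHom.fst A B).subgroupMap (Subgroup.closure {(a, z), (b, w)}))
      (MonoidHom.subgroupMap_surjective _ _)
    rw [MonoidHom.map_closure, Set.image_pair] at this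
    exact this
  · intro hc
    haveI := hc
    haveI := hB
    have hle : Subgroup.closure ({(a, z), (b, w)} : Set (A × B)) ≤
        (Subgroup.closure {a, b}).prod ⊤ := by
      rw [Subgroup.closure_le]
      rintro x (rfl | rfl)
      · exact Subgroup.mem_prod.mpr ⟨Subgroup.subset_closure (by simp), Subgroup.mem_top _⟩
      · exact Subgroup.mem_prod.mpr ⟨Subgroup.subset_closure (by simp), Subgroup.mem_top _⟩
    haveI : Group.IsNilpotent ((Subgroup.closure {a, b}).prod (⊤ : Subgroup B)) :=
      nilpotent_of_mulEquiv (Subgroup.prodEquiv _ _).symm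
    exact nilpotent_of_mulEquiv (Subgroup.subgroupOfEquivOfLe hle)


lemma mem_nilpotentizer_prod_s14 {A B : Type*} [Group A] [Group B] (hB : Group.IsNilpotent B)
    (a : A) (z : B) : (a, z) ∈ nilpotentizer (A × B) ↔ a ∈ nilpotentizer A := by
  constructor
  · intro H b
    exact (closure_pair_prod_iff hB a b z 1).mp (H (b, 1))
  · rintro H ⟨b, w⟩
    exact (closure_pair_prod_iff hB a b z w).mpr (H b)

lemma mem_nilpotentizer_mk_iff [Finite G] (g : G) :
    (g : G ⧸ hypercenter G) ∈ nilpotentizer (G ⧸ hypercenter G) ↔ g ∈ nilpotentizer G := by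
  constructor
  · intro H h
    exact (closure_pair_mk_iff g h).mp (H (h : G ⧸ hypercenter G))
  · intro H q
    obtain ⟨h, rfl⟩ := QuotientGroup.mk_surjective q
    exact (closure_pair_mk_iff g h).mpr (H h)


end Aux
end AuxLemmas

theorem nilpotentGraph_iso_quotient_prod_hypercenter {G : Type*} [Group G] [Finite G]
    (hG : ¬ Group.IsNilpotent G) :
    Nonempty ((nilpotentGraph G) ≃g
      (nilpotentGraph ((G ⧸ hypercenter G) × (hypercenter G)))) := by
  haveI hB : Group.IsNilpotent (hypercenter G) := hypercenter_nilpotent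
  set N := hypercenter G with hNdef
  have hmemN : ∀ g : G, g * ((g : G ⧸ N)).out⁻¹ ∈ N := fun g => by
    rw [← QuotientGroup.eq_one_iff]
    rw [QuotientGroup.mk_mul, QuotientGroup.mk_inv, QuotientGroup.out_eq', mul_inv_cancel]
  have hmk : ∀ (q : G ⧸ N) (z : N), (((z : G) * q.out : G) : G ⧸ N) = q := fun q z => by
    rw [QuotientGroup.mk_mul, (QuotientGroup.eq_one_iff _).mpr z.2, one_mul,
      QuotientGroup.out_eq']
  have vG : ∀ g : G, g ∉ nilpotentizer G →
      (((g : G ⧸ N), (⟨g * ((g : G ⧸ N)).out⁻¹, hmemN g⟩ : N)) : (G ⧸ N) × N) ∉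
        nilpotentizer ((G ⧸ N) × N) := by
    intro g hg hmem
    exact hg ((mem_nilpotentizer_mk_iff g).mp ((mem_nilpotentizer_prod_s14 hB _ _).mp hmem))
  have vH : ∀ p : (G ⧸ N) × N, p ∉ nilpotentizer ((G ⧸ N) × N) →
      (p.2 : G) * p.1.out ∉ nilpotentizer G := by
    intro p hp hmem
    apply hp
    have h1 := (mem_nilpotentizer_mk_iff ((p.2 : G) * p.1.out)).mpr hmem
    rw [hmk p.1 p.2] at h1
    exact (mem_nilpotentizer_prod_s14 hB p.1 p.2).mpr h1
  let e : {x : G // x ∉ nilpotentizer G} ≃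
      {x : (G ⧸ N) × N // x ∉ nilpotentizer ((G ⧸ N) × N)} :=
    { toFun := fun v => ⟨(((v : G) : G ⧸ N),
        ⟨(v : G) * (((v : G) : G ⧸ N)).out⁻¹, hmemN _⟩), vG _ v.2⟩
      invFun := fun w => ⟨((w : (G ⧸ N) × N).2 : G) * ((w : (G ⧸ N) × N).1).out, vH _ w.2⟩
      left_inv := fun v => by
        apply Subtype.ext
        show (v : G) * (((v : G) : G ⧸ N)).out⁻¹ * (((v : G) : G ⧸ N)).out = (v : G)
        exact inv_mul_cancel_right _ _
      right_inv := fun w => by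
        apply Subtype.ext
        refine Prod.ext (hmk _ _) (Subtype.ext ?_)
        show ((w : (G ⧸ N) × N).2 : G) * ((w : (G ⧸ N) × N).1).out *
          (((((w : (G ⧸ N) × N).2 : G) * ((w : (G ⧸ N) × N).1).out : G) : G ⧸ N)).out⁻¹ =
          ((w : (G ⧸ N) × N).2 : G)
        rw [hmk]
        exact mul_inv_cancel_right _ _ }
  refine ⟨⟨e, ?_⟩⟩
  intro a b
  show (e a ≠ e b ∧ _) ↔ (a ≠ b ∧ _)
  apply and_congr
  · exact not_congr e.apply_eq_iff_eq
  · exact (closure_pair_prod_iff hB _ _ _ _).trans (closure_pair_mk_iff (a : G) (b : G))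
end

section
/- No finite non-nilpotent group has a self-complementary nilpotent graph: for any finite non-nilpotent group G there is no bijection f of G \ Z*(G) to itself such that for all distinct x, y, ⟨x,y⟩ is nilpotent if and only if ⟨f(x),f(y)⟩ is not nilpotent. -/
open Subgroup

universe u

namespace NilSC

variable {G : Type u} [Group G]


lemma mem_cl_left (a b : G) : a ∈ closure ({a, b} : Set G) :=
  subset_closure (Set.mem_insert _ _)

lemma mem_cl_right (a b : G) : b ∈ closure ({a, b} : Set G) :=
  subset_closure (Set.mem_insert_of_mem _ rfl)

lemma cl_le_iff {a b : G} {K : Subgroup G} :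
    closure ({a, b} : Set G) ≤ K ↔ a ∈ K ∧ b ∈ K := by
  rw [closure_le]
  constructor
  · intro h; exact ⟨h (Set.mem_insert _ _), h (Set.mem_insert_of_mem _ rfl)⟩
  · rintro ⟨h1, h2⟩ x hx
    rcases hx with rfl | hx
    · exact h1
    · rcases hx with rfl; exact h2

lemma cl_comm (a b : G) : closure ({a, b} : Set G) = closure {b, a} := by
  rw [Set.pair_comm]

lemma cl_inv_left (a b : G) : closure ({a⁻¹, b} : Set G) = closure {a, b} := by
  apply le_antisymm <;> rw [cl_le_iff]
  · exact ⟨inv_mem (mem_cl_left a b), mem_cl_right a b⟩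
  · exact ⟨by simpa using inv_mem (mem_cl_left a⁻¹ b), mem_cl_right _ b⟩

lemma cl_inv_right (a b : G) : closure ({a, b⁻¹} : Set G) = closure {a, b} := by
  rw [cl_comm, cl_inv_left, cl_comm]

lemma cl_mul (a b : G) : closure ({a, a * b} : Set G) = closure {a, b} := by
  apply le_antisymm <;> rw [cl_le_iff]
  · exact ⟨mem_cl_left a b, mul_mem (mem_cl_left a b) (mem_cl_right a b)⟩
  · refine ⟨mem_cl_left a (a*b), ?_⟩
    have := mul_mem (inv_mem (mem_cl_left a (a*b))) (mem_cl_right a (a*b))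
    simpa using this

lemma nilpotent_of_commute {a b : G} (h : Commute a b) :
    Group.IsNilpotent (closure ({a, b} : Set G)) := by
  have hcomm : ∀ x ∈ closure ({a, b} : Set G), ∀ y ∈ closure ({a, b} : Set G),
      Commute x y := by
    intro x hx y hy
    induction hx, hy using closure_induction₂ with
    | mem x y hx hy =>
      rcases hx with rfl | hx <;> rcases hy with rfl | hy
      · exact Commute.refl _
      · rcases hy with rfl; exact h
      · rcases hx with rfl; exact h.symm
      · rcases hx with rfl; rcases hy with rfl; exact Commute.refl _
    | one_left x hx => exact Commute.one_left x
    | one_right x hx => exact Commute.one_right x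
    | mul_left x y z hx hy hz h1 h2 => exact h1.mul_left h2
    | mul_right y z x hy hz hx h1 h2 => exact h1.mul_right h2
    | inv_left x y hx hy h1 => exact h1.inv_left
    | inv_right x y hx hy h1 => exact h1.inv_right
  haveI : IsMulCommutative (closure ({a, b} : Set G)) :=
    ⟨⟨fun x y => Subtype.ext (hcomm x x.2 y y.2)⟩⟩
  letI : CommGroup (closure ({a, b} : Set G)) :=
    { (inferInstance : Group (closure ({a, b} : Set G))) with
      mul_comm := fun x y => Subtype.ext (hcomm x x.2 y y.2) }
  exact CommGroup.isNilpotent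

lemma nilpotent_singleton (a : G) : Group.IsNilpotent (closure ({a} : Set G)) := by
  have h := nilpotent_of_commute (Commute.refl a)
  rwa [Set.pair_eq_singleton] at h

lemma nilpotent_self_inv (a : G) : Group.IsNilpotent (closure ({a, a⁻¹} : Set G)) := by
  rw [cl_inv_right, Set.pair_eq_singleton]
  exact nilpotent_singleton a

lemma subnil {H K : Subgroup G} (hle : H ≤ K) (hK : Group.IsNilpotent K) :
    Group.IsNilpotent H := by
  haveI := hK
  exact nilpotent_of_mulEquiv (Subgroup.subgroupOfEquivOfLe hle)




lemma conj_pow_eq {K : Type u} [Group K] (a b w : K) (hw : w ∈ Subgroup.center K)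
    (hab : a * b * a⁻¹ = w * b) : ∀ j : ℕ, a ^ j * b * (a ^ j)⁻¹ = w ^ j * b := by
  intro j
  induction j with
  | zero => simp
  | succ n ih =>
    have hcw : ∀ x : K, w ^ n * x = x * w ^ n := fun x =>
      ((Subgroup.mem_center_iff.mp (pow_mem hw n)) x).symm
    calc a ^ (n+1) * b * (a ^ (n+1))⁻¹
        = a * (a ^ n * b * (a ^ n)⁻¹) * a⁻¹ := by
          rw [pow_succ']; group
      _ = a * (w ^ n * b) * a⁻¹ := by rw [ih]
      _ = w ^ n * (a * b * a⁻¹) := by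
          rw [← mul_assoc, ← hcw a, mul_assoc, mul_assoc, mul_assoc]
      _ = w ^ n * (w * b) := by rw [hab]
      _ = w ^ (n+1) * b := by rw [pow_succ]; group

lemma commute_aux : ∀ (n : ℕ) (K : Type u) [Group K] [hK : Group.IsNilpotent K],
    Group.nilpotencyClass K ≤ n → ∀ a b : K, (∃ i : ℕ, a ^ 2 ^ i = 1) →
    Odd (orderOf b) → Commute a b := by
  intro n
  induction n with
  | zero =>
    intro K _ _ hc a b _ _
    haveI : Subsingleton K :=
      nilpotencyClass_zero_iff_subsingleton.mp (Nat.le_zero.mp hc)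
    exact Subsingleton.elim (a * b) (b * a)
  | succ n ih =>
    intro K _ _ hc a b ha hb
    obtain ⟨i, hai⟩ := ha
    have hcq : Group.nilpotencyClass (K ⧸ Subgroup.center K) ≤ n := by
      rw [nilpotencyClass_quotient_center]; omega
    -- orders in the quotient
    have hbq : Odd (orderOf ((b : K) : K ⧸ Subgroup.center K)) := by
      have hdvd : orderOf ((b : K) : K ⧸ Subgroup.center K) ∣ orderOf b :=
        orderOf_map_dvd (QuotientGroup.mk' (Subgroup.center K)) b
      have h2 := Nat.odd_iff.mp hb
      rw [Nat.odd_iff]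
      rcases Nat.even_or_odd (orderOf ((b : K) : K ⧸ Subgroup.center K)) with he | ho
      · exfalso
        have h4 : 2 ∣ orderOf ((b : K) : K ⧸ Subgroup.center K) := he.two_dvd
        obtain ⟨d, hd⟩ := h4.trans hdvd
        omega
      · exact Nat.odd_iff.mp ho
    have haq : ∃ j : ℕ, ((a : K) : K ⧸ Subgroup.center K) ^ 2 ^ j = 1 :=
      ⟨i, by rw [← QuotientGroup.mk_pow, hai]; rfl⟩
    have hcomm : Commute ((a : K) : K ⧸ Subgroup.center K) (b : K ⧸ Subgroup.center K) :=
      ih _ hcq _ _ haq hbq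
    -- the commutator is central
    set w : K := a * b * a⁻¹ * b⁻¹ with hw
    have hwc : w ∈ Subgroup.center K := by
      rw [← QuotientGroup.eq_one_iff (G := K) (N := Subgroup.center K)]
      have hco : ((w : K) : K ⧸ Subgroup.center K)
          = (a : K ⧸ Subgroup.center K) * (b : K ⧸ Subgroup.center K) *
            ((a : K ⧸ Subgroup.center K))⁻¹ * ((b : K ⧸ Subgroup.center K))⁻¹ := by
        rw [hw]; push_cast; rfl
      rw [hco, hcomm.eq]
      group
    have hab : a * b * a⁻¹ = w * b := by rw [hw]; group
    have hba : b * a * b⁻¹ = w⁻¹ * a := by rw [hw]; group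
    have hw2 : w ^ 2 ^ i = 1 := by
      have h := conj_pow_eq a b w hwc hab (2 ^ i)
      rw [hai] at h
      have hb2 : w ^ 2 ^ i * b = 1 * b := by rw [← h]; group
      exact mul_right_cancel hb2
    have hwm : (w⁻¹) ^ orderOf b = 1 := by
      have h := conj_pow_eq b a w⁻¹ (inv_mem hwc) hba (orderOf b)
      rw [pow_orderOf_eq_one] at h
      have hb2 : (w⁻¹) ^ orderOf b * a = 1 * a := by rw [← h]; group
      exact mul_right_cancel hb2
    have hd1 : orderOf w ∣ 2 ^ i := orderOf_dvd_of_pow_eq_one hw2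
    have hd2 : orderOf w ∣ orderOf b := by
      rw [← orderOf_inv]; exact orderOf_dvd_of_pow_eq_one hwm
    have hcop : Nat.Coprime (2 ^ i) (orderOf b) := by
      apply Nat.Coprime.pow_left
      refine (Nat.prime_two.coprime_iff_not_dvd).mpr ?_
      intro hdd
      obtain ⟨d, hd⟩ := hdd
      have := Nat.odd_iff.mp hb
      omega
    have : orderOf w ∣ 1 := by
      have := Nat.dvd_gcd hd1 hd2
      rwa [Nat.Coprime.gcd_eq_one hcop] at this
    have hw1 : w = 1 := by
      rw [← orderOf_eq_one_iff]; exact Nat.dvd_one.mp this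
    have : a * b * a⁻¹ * b⁻¹ = 1 := hw1
    calc a * b = (a * b * a⁻¹ * b⁻¹) * (b * a) := by group
    _ = b * a := by rw [this]; group

lemma commute_of_nilpotent {K : Type u} [Group K] (hK : Group.IsNilpotent K)
    (a b : K) (ha : ∃ i : ℕ, a ^ 2 ^ i = 1) (hb : Odd (orderOf b)) : Commute a b := by
  haveI := hK
  exact commute_aux (Group.nilpotencyClass K) K le_rfl a b ha hb

lemma zpow_conj_of_inv {z c : G} (hcj : z * c * z⁻¹ = c⁻¹) (k : ℤ) :
    z * c ^ k = c ^ (-k) * z := by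
  have h1 : (z * c * z⁻¹) ^ k = z * c ^ k * z⁻¹ := conj_zpow
  rw [hcj] at h1
  have h2 : z * c ^ k * z⁻¹ = c ^ (-k) := by rw [← h1, inv_zpow, zpow_neg]
  calc z * c ^ k = (z * c ^ k * z⁻¹) * z := by group
  _ = c ^ (-k) * z := by rw [h2]

/-- the subgroup generated by an involution inverting a 2-element is a 2-group, hence nilpotent -/
lemma nilpotent_dihedral_two {z c : G} [Finite G] (hz : z * z = 1)
    (hcj : z * c * z⁻¹ = c⁻¹) (h2 : ∃ m : ℕ, c ^ 2 ^ m = 1) :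
    Group.IsNilpotent (closure ({z, c} : Set G)) := by
  obtain ⟨m, hm⟩ := h2
  have hzinv : z⁻¹ = z := by
    rw [← mul_one z⁻¹, ← hz, ← mul_assoc]; group
  set S : Subgroup G :=
    { carrier := {g : G | ∃ k : ℤ, g = c ^ k ∨ g = c ^ k * z}
      one_mem' := ⟨0, Or.inl (by simp)⟩
      mul_mem' := by
        rintro x y ⟨k, hk | hk⟩ ⟨l, hl | hl⟩ <;> subst hk <;> subst hl
        · exact ⟨k + l, Or.inl (by rw [zpow_add])⟩
        · exact ⟨k + l, Or.inr (by rw [zpow_add]; group)⟩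
        · refine ⟨k - l, Or.inr ?_⟩
          rw [mul_assoc, zpow_conj_of_inv hcj l, ← mul_assoc, ← zpow_add]
          ring_nf
        · refine ⟨k - l, Or.inl ?_⟩
          have : c ^ k * z * (c ^ l * z) = c ^ k * (z * c ^ l) * z := by group
          rw [this, zpow_conj_of_inv hcj l, ← mul_assoc, ← zpow_add, mul_assoc, hz, mul_one]
          ring_nf
      inv_mem' := by
        rintro x ⟨k, hk | hk⟩ <;> subst hk
        · exact ⟨-k, Or.inl (by rw [zpow_neg])⟩
        · refine ⟨k, Or.inr ?_⟩
          rw [mul_inv_rev, hzinv]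
          have h := zpow_conj_of_inv hcj (-k)
          rw [zpow_neg, neg_neg] at h
          rw [h] } with hS
  have hle : closure ({z, c} : Set G) ≤ S := by
    rw [cl_le_iff]
    constructor
    · exact ⟨0, Or.inr (by simp)⟩
    · exact ⟨1, Or.inl (by simp)⟩
  have hcz : c ^ ((2 ^ m : ℕ) : ℤ) = 1 := by rw [zpow_natCast, hm]
  have hp : IsPGroup 2 (closure ({z, c} : Set G)) := by
    intro g
    obtain ⟨k, hk | hk⟩ := hle g.2
    · refine ⟨m, ?_⟩
      have : (g : G) ^ 2 ^ m = 1 := by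
        rw [hk, ← zpow_natCast, ← zpow_mul, mul_comm, zpow_mul, hcz, one_zpow]
      exact Subtype.ext (by rw [SubmonoidClass.coe_pow]; simpa using this)
    · refine ⟨1, ?_⟩
      have : (g : G) ^ 2 ^ 1 = 1 := by
        have e : (2:ℕ) ^ 1 = 2 := by norm_num
        rw [hk, e, pow_two]
        calc c ^ k * z * (c ^ k * z) = c ^ k * (z * c ^ k) * z := by group
        _ = 1 := by
          rw [zpow_conj_of_inv hcj k, ← mul_assoc, ← zpow_add, mul_assoc, hz, mul_one]
          simp
      exact Subtype.ext (by rw [SubmonoidClass.coe_pow]; simpa using this)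
  exact hp.isNilpotent

lemma isPGroup_zpowers' {K : Type u} [Group K] {p : ℕ} {a : K} {i : ℕ}
    (ha : a ^ p ^ i = 1) : IsPGroup p (Subgroup.zpowers a) := by
  intro g
  refine ⟨i, ?_⟩
  obtain ⟨m, hm⟩ := g.2
  apply Subtype.ext
  rw [SubmonoidClass.coe_pow, OneMemClass.coe_one]
  have hgm : (g : K) = a ^ m := hm.symm
  rw [hgm, ← zpow_natCast (a ^ m), ← zpow_mul, mul_comm, zpow_mul, zpow_natCast, ha, one_zpow]

lemma not_nilpotent_dihedral_odd {z c : G} [Finite G] (hz : z * z = 1)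
    (hcj : z * c * z⁻¹ = c⁻¹) (h2 : ¬ ∃ m : ℕ, c ^ 2 ^ m = 1) :
    ¬ Group.IsNilpotent (closure ({z, c} : Set G)) := by
  intro hnil
  set n := orderOf c with hn
  have hn0 : n ≠ 0 := (orderOf_pos c).ne'
  set k := n.factorization 2 with hk
  set c' := c ^ 2 ^ k with hc'
  have hmem_c' : c' ∈ closure ({z, c} : Set G) := pow_mem (mem_cl_right z c) _
  have hmem_z : z ∈ closure ({z, c} : Set G) := mem_cl_left z c
  have hdvd : 2 ^ k ∣ n := Nat.ordProj_dvd n 2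
  have hord : orderOf c' = n / 2 ^ k := by
    rw [hc', orderOf_pow, ← hn, Nat.gcd_eq_right hdvd]
  have hodd : Odd (orderOf c') := by
    rw [hord, Nat.odd_iff]
    have hnd := Nat.not_dvd_ordCompl Nat.prime_two hn0
    have : ¬ 2 ∣ n / 2 ^ k := hnd
    omega
  have hcj' : z * c' * z⁻¹ = c'⁻¹ := by
    have h := conj_pow (i := 2 ^ k) (a := z) (b := c)
    rw [hcj] at h
    rw [hc', ← h, inv_pow]
  have hzK : (⟨z, hmem_z⟩ : closure ({z, c} : Set G)) ^ 2 ^ 1 = 1 := by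
    apply Subtype.ext
    rw [SubmonoidClass.coe_pow]
    have e : (2:ℕ) ^ 1 = 2 := by norm_num
    rw [e, pow_two]
    simpa using hz
  have hcomm := commute_of_nilpotent hnil ⟨z, hmem_z⟩ ⟨c', hmem_c'⟩ ⟨1, hzK⟩
    (by rw [Subgroup.orderOf_mk]; exact hodd)
  have hcc : z * c' = c' * z := congrArg Subtype.val hcomm.eq
  have hfix : c'⁻¹ = c' := by
    rw [← hcj', hcc, mul_assoc, mul_inv_cancel, mul_one]
  have hsq : c' ^ 2 = 1 := by
    rw [pow_two]
    nth_rewrite 2 [← hfix]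
    exact mul_inv_cancel c'
  have hdd : orderOf c' ∣ 2 := orderOf_dvd_of_pow_eq_one hsq
  have h1 : orderOf c' = 1 := by
    rcases Nat.odd_iff.mp hodd with h
    rcases (Nat.dvd_prime Nat.prime_two).mp hdd with h' | h' <;> omega
  have : c' = 1 := orderOf_eq_one_iff.mp h1
  exact h2 ⟨k, by rw [← hc']; exact this⟩

lemma nilpotent_of_two_generated (G : Type u) [Group G] [Finite G]
    (h : ∀ a b : G, Group.IsNilpotent (closure ({a, b} : Set G))) :
    Group.IsNilpotent G := by
  have key : ∀ (p : ℕ) (_hp : Fact p.Prime) (P : Sylow p G), (↑P : Subgroup G).Normal := by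
    intro p hp P
    -- the set of p-elements is a subgroup
    have hmul : ∀ x y : G, (∃ i : ℕ, x ^ p ^ i = 1) → (∃ j : ℕ, y ^ p ^ j = 1) →
        ∃ l : ℕ, (x * y) ^ p ^ l = 1 := by
      intro x y ⟨i, hi⟩ ⟨j, hj⟩
      set K := closure ({x, y} : Set G) with hK
      haveI hKn : Group.IsNilpotent K := h x y
      have hxK : x ∈ K := mem_cl_left x y
      have hyK : y ∈ K := mem_cl_right x y
      -- Sylow p of K is normal
      have htfae := isNilpotent_of_finite_tfae (G := ↥K)
      have hsyl' : ∀ (q : ℕ) (_ : Fact q.Prime) (Q : Sylow q ↥K),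
          (↑Q : Subgroup ↥K).Normal := (htfae.out 0 3).mp hKn
      have hsyl := hsyl' p hp
      -- x and y are p-elements of K
      have hxp : IsPGroup p (Subgroup.zpowers (⟨x, hxK⟩ : ↥K)) :=
        isPGroup_zpowers' (Subtype.ext (by rw [SubmonoidClass.coe_pow]; exact hi))
      have hyp : IsPGroup p (Subgroup.zpowers (⟨y, hyK⟩ : ↥K)) :=
        isPGroup_zpowers' (Subtype.ext (by rw [SubmonoidClass.coe_pow]; exact hj))
      obtain ⟨Q, hQ⟩ := hxp.exists_le_sylow
      obtain ⟨Q', hQ'⟩ := hyp.exists_le_sylow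
      haveI hQn : (Q : Subgroup ↥K).Normal := hsyl Q
      haveI : Q.Normal := hQn
      have hQQ' : Q' = Q := by
        obtain ⟨g, hg⟩ := MulAction.exists_smul_eq K Q' Q
        rw [← hg, Sylow.smul_eq_of_normal]
      have hxQ : (⟨x, hxK⟩ : K) ∈ Q := hQ (Subgroup.mem_zpowers _)
      have hyQ : (⟨y, hyK⟩ : K) ∈ Q := by
        rw [← hQQ'] at *
        exact hQ' (Subgroup.mem_zpowers _)
      have hmulQ : (⟨x, hxK⟩ : K) * ⟨y, hyK⟩ ∈ Q := mul_mem hxQ hyQ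
      obtain ⟨l, hl⟩ := Q.isPGroup' ⟨_, hmulQ⟩
      refine ⟨l, ?_⟩
      have := congrArg (Subtype.val ∘ Subtype.val) hl
      simpa [SubmonoidClass.coe_pow] using this
    set N : Subgroup G :=
      { carrier := {g : G | ∃ i : ℕ, g ^ p ^ i = 1}
        one_mem' := ⟨0, one_pow _⟩
        mul_mem' := fun hx hy => hmul _ _ hx hy
        inv_mem' := by
          rintro x ⟨i, hi⟩
          exact ⟨i, by rw [inv_pow, hi, inv_one]⟩ } with hN
    have hNnormal : N.Normal := by
      constructor
      rintro x ⟨i, hi⟩ g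
      refine ⟨i, ?_⟩
      rw [conj_pow, hi, mul_one, mul_inv_cancel]
    have hNp : IsPGroup p N := fun g => g.2.imp fun i hi =>
      Subtype.ext (by rw [SubmonoidClass.coe_pow, OneMemClass.coe_one]; exact hi)
    have hPN : (↑P : Subgroup G) ≤ N := by
      intro g hg
      obtain ⟨i, hi⟩ := P.isPGroup' ⟨g, hg⟩
      exact ⟨i, by simpa [SubmonoidClass.coe_pow] using congrArg Subtype.val hi⟩
    have hNeq : N = ↑P := P.is_maximal' hNp hPN
    rw [← hNeq]
    exact hNnormal
  have htfae := isNilpotent_of_finite_tfae (G := G)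
  exact (htfae.out 0 3).mpr key

section Vertex

local notation "IsNil" a ", " b => Group.IsNilpotent (Subgroup.closure ({a, b} : Set G))

lemma not_mem_niler_left {a b : G} (h : ¬ Group.IsNilpotent (closure ({a, b} : Set G))) :
    a ∉ nilpotentizer G := fun ha => h (ha b)

lemma not_mem_niler_right {a b : G} (h : ¬ Group.IsNilpotent (closure ({a, b} : Set G))) :
    b ∉ nilpotentizer G := by
  intro hb
  have := hb a
  rw [cl_comm] at this
  exact h this

lemma inv_not_mem_niler {a : G} (h : a ∉ nilpotentizer G) : a⁻¹ ∉ nilpotentizer G := by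
  intro h'
  apply h
  intro hh
  have := h' hh
  rwa [cl_inv_left] at this

lemma one_mem_niler : (1 : G) ∈ nilpotentizer G := by
  intro h
  have hle : closure ({1, h} : Set G) ≤ closure {h} :=
    cl_le_iff.mpr ⟨one_mem _, subset_closure rfl⟩
  exact subnil hle (nilpotent_singleton h)

lemma inv_eq_self {a : G} (h : a * a = 1) : a⁻¹ = a := inv_eq_of_mul_eq_one_right h

lemma invol_conj {u v : G} (hu : u * u = 1) (hv : v * v = 1) :
    u * (u * v) * u⁻¹ = (u * v)⁻¹ := by
  rw [inv_eq_self hu, mul_inv_rev, inv_eq_self hu, inv_eq_self hv, ← mul_assoc, hu, one_mul]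

lemma invol_conj_right {u v : G} (hu : u * u = 1) (hv : v * v = 1) :
    v * (u * v) * v⁻¹ = (u * v)⁻¹ := by
  rw [inv_eq_self hv, mul_inv_rev, inv_eq_self hu, inv_eq_self hv]
  calc v * (u * v) * v = v * u * (v * v) := by group
  _ = v * u := by rw [hv, mul_one]

lemma conj_pow_inv {z r : G} (h : z * r * z⁻¹ = r⁻¹) (j : ℕ) :
    z * r ^ j * z⁻¹ = (r ^ j)⁻¹ := by
  rw [← conj_pow, h, inv_pow]

/-- Claim C : a complementing bijection sends non-involution vertices to involutions. -/
lemma claimC (f : {x : G // x ∉ nilpotentizer G} ≃ {x : G // x ∉ nilpotentizer G})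
    (hf : ∀ x y : {x : G // x ∉ nilpotentizer G}, x ≠ y →
      (Group.IsNilpotent (Subgroup.closure ({(x : G), (y : G)} : Set G)) ↔
        ¬ Group.IsNilpotent (Subgroup.closure ({(f x : G), (f y : G)} : Set G))))
    (x : {x : G // x ∉ nilpotentizer G}) (hx : (x : G) * (x : G) ≠ 1) :
    (f x : G) * (f x : G) = 1 := by
  by_contra hu
  set x' : {x : G // x ∉ nilpotentizer G} := ⟨(x : G)⁻¹, inv_not_mem_niler x.2⟩ with hx'
  have hcx' : (x' : G) = (x : G)⁻¹ := rfl
  have hxx' : x ≠ x' := by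
    intro e
    apply hx
    have h1 : (x : G) = (x : G)⁻¹ := congrArg Subtype.val e
    calc (x : G) * (x : G) = (x : G) * (x : G)⁻¹ := by rw [← h1]
    _ = 1 := mul_inv_cancel _
  have hxnil : Group.IsNilpotent (closure ({(x : G), (x' : G)} : Set G)) := by
    rw [hcx']
    exact nilpotent_self_inv _
  have huv : ¬ Group.IsNilpotent (closure ({(f x : G), (f x' : G)} : Set G)) :=
    (hf x x' hxx').mp hxnil
  by_cases hv : (f x' : G) = (f x : G)⁻¹
  · apply huv
    rw [hv]
    exact nilpotent_self_inv _
  · set u' : {x : G // x ∉ nilpotentizer G} := ⟨(f x : G)⁻¹, inv_not_mem_niler (f x).2⟩ with hu'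
    have hcu' : (u' : G) = (f x : G)⁻¹ := rfl
    set w := f.symm u' with hw
    have hfw : f w = u' := f.apply_symm_apply u'
    have hwx : w ≠ x := by
      intro e
      apply hu
      have h1 : f x = u' := by rw [← e, hfw]
      have h2 : (f x : G) = (f x : G)⁻¹ := congrArg Subtype.val h1
      calc (f x : G) * (f x : G) = (f x : G) * (f x : G)⁻¹ := by rw [← h2]
      _ = 1 := mul_inv_cancel _
    have hwx' : w ≠ x' := by
      intro e
      apply hv
      have h1 : f x' = u' := by rw [← e, hfw]
      exact congrArg Subtype.val h1
    have h2 : ¬ Group.IsNilpotent (closure ({(x : G), (w : G)} : Set G)) := by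
      intro hnl
      apply (hf x w (Ne.symm hwx)).mp hnl
      rw [hfw, hcu']
      exact nilpotent_self_inv _
    have h3 : ¬ Group.IsNilpotent (closure ({(x' : G), (w : G)} : Set G)) := by
      intro hnl
      apply h2
      rw [hcx'] at hnl
      rwa [cl_inv_left] at hnl
    have h4 : Group.IsNilpotent (closure ({(f x' : G), (f w : G)} : Set G)) :=
      by_contra fun hc => h3 ((hf x' w (Ne.symm hwx')).mpr hc)
    apply huv
    rw [hfw, hcu'] at h4
    rw [cl_inv_right] at h4
    rwa [cl_comm]

lemma nilpotent_pair_self (a : G) : Group.IsNilpotent (closure ({a, a} : Set G)) := by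
  rw [Set.pair_eq_singleton]
  exact nilpotent_singleton a

lemma ne_inv_of_sq {c : G} (h : c * c ≠ 1) : c ≠ c⁻¹ := by
  intro e
  apply h
  calc c * c = c * c⁻¹ := by rw [← e]
  _ = 1 := mul_inv_cancel _

lemma inv_sq_ne {c : G} (h : c * c ≠ 1) : c⁻¹ * c⁻¹ ≠ 1 := by
  intro e
  apply h
  rw [← mul_inv_rev] at e
  rw [← inv_inv (c * c), e, inv_one]

lemma invol_pair_facts [Finite G] {u v : G} (hu : u * u = 1) (hv : v * v = 1)
    (hnuv : ¬ Group.IsNilpotent (closure ({u, v} : Set G))) :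
    ¬ ∃ m : ℕ, (u * v) ^ 2 ^ m = 1 := by
  intro h2
  apply hnuv
  rw [← cl_mul u v]
  exact nilpotent_dihedral_two hu (invol_conj hu hv) h2

lemma sq_ne_of_not_two_pow {q : G} (h2 : ¬ ∃ m : ℕ, q ^ 2 ^ m = 1) : q * q ≠ 1 := by
  intro h
  apply h2
  refine ⟨1, ?_⟩
  have e : (2:ℕ) ^ 1 = 2 := by norm_num
  rw [e, pow_two]
  exact h

lemma ne_one_of_not_two_pow {q : G} (h2 : ¬ ∃ m : ℕ, q ^ 2 ^ m = 1) : q ≠ 1 := by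
  intro h
  exact h2 ⟨0, by rw [h, one_pow]⟩

lemma odd_part_odd [Finite G] {q : G} (h2 : ¬ ∃ m : ℕ, q ^ 2 ^ m = 1) :
    Odd (orderOf (q ^ 2 ^ ((orderOf q).factorization 2))) := by
  set n := orderOf q with hn
  have hn0 : n ≠ 0 := (orderOf_pos q).ne'
  set k := n.factorization 2 with hk
  have hdvd : 2 ^ k ∣ n := Nat.ordProj_dvd n 2
  have hord : orderOf (q ^ 2 ^ k) = n / 2 ^ k := by
    rw [orderOf_pow, ← hn, Nat.gcd_eq_right hdvd]
  rw [hord, Nat.odd_iff]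
  have hnd : ¬ 2 ∣ n / 2 ^ k := Nat.not_dvd_ordCompl Nat.prime_two hn0
  omega

lemma not_two_pow_of_pow {q : G} {j : ℕ} (h2 : ¬ ∃ m : ℕ, q ^ 2 ^ m = 1) :
    ¬ ∃ m : ℕ, (q ^ 2 ^ j) ^ 2 ^ m = 1 := by
  rintro ⟨m, hm⟩
  rw [← pow_mul, ← pow_add] at hm
  exact h2 ⟨j + m, hm⟩

lemma exists_vertex_sq_ne_one [Finite G] (hG : ¬ Group.IsNilpotent G) :
    ∃ c : G, c ∉ nilpotentizer G ∧ c * c ≠ 1 := by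
  have hex : ∃ a b : G, ¬ Group.IsNilpotent (closure ({a, b} : Set G)) := by
    by_contra hno
    push_neg at hno
    exact hG (nilpotent_of_two_generated G hno)
  obtain ⟨a, b, hab⟩ := hex
  by_cases ha2 : a * a = 1
  · by_cases hb2 : b * b = 1
    · refine ⟨a * b, ?_, ?_⟩
      · apply not_mem_niler_left (b := a)
        intro hnl
        apply hab
        rw [cl_comm, cl_mul] at hnl
        exact hnl
      · intro habab
        apply hab
        apply nilpotent_of_commute
        have h1 : a * b = (a * b)⁻¹ := (inv_eq_self habab).symm
        rw [mul_inv_rev, inv_eq_self ha2, inv_eq_self hb2] at h1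
        exact h1
    · exact ⟨b, not_mem_niler_right hab, hb2⟩
  · exact ⟨a, not_mem_niler_left hab, ha2⟩

/-- given a complementing bijection, there is a vertex of odd order (≥ 3). -/
lemma exists_odd_vertex [Finite G] (hG : ¬ Group.IsNilpotent G)
    (f : {x : G // x ∉ nilpotentizer G} ≃ {x : G // x ∉ nilpotentizer G})
    (hf : ∀ x y : {x : G // x ∉ nilpotentizer G}, x ≠ y →
      (Group.IsNilpotent (Subgroup.closure ({(x : G), (y : G)} : Set G)) ↔
        ¬ Group.IsNilpotent (Subgroup.closure ({(f x : G), (f y : G)} : Set G)))) :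
    ∃ c : G, c ∉ nilpotentizer G ∧ Odd (orderOf c) ∧ ¬ ∃ m : ℕ, c ^ 2 ^ m = 1 := by
  obtain ⟨c0, hc0n, hc0sq⟩ := exists_vertex_sq_ne_one hG
  set x0 : {x : G // x ∉ nilpotentizer G} := ⟨c0, hc0n⟩ with hx0
  set x0' : {x : G // x ∉ nilpotentizer G} := ⟨c0⁻¹, inv_not_mem_niler hc0n⟩ with hx0'
  have hne : x0 ≠ x0' := by
    intro e
    exact ne_inv_of_sq hc0sq (congrArg Subtype.val e)
  have hu : (f x0 : G) * (f x0 : G) = 1 := claimC f hf x0 hc0sq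
  have hv : (f x0' : G) * (f x0' : G) = 1 := claimC f hf x0' (inv_sq_ne hc0sq)
  have hnuv : ¬ Group.IsNilpotent (closure ({(f x0 : G), (f x0' : G)} : Set G)) := by
    apply (hf x0 x0' hne).mp
    show Group.IsNilpotent (closure ({c0, c0⁻¹} : Set G))
    exact nilpotent_self_inv c0
  set q : G := (f x0 : G) * (f x0' : G) with hq
  have h2q : ¬ ∃ m : ℕ, q ^ 2 ^ m = 1 := invol_pair_facts hu hv hnuv
  set k := (orderOf q).factorization 2 with hk
  refine ⟨q ^ 2 ^ k, ?_, odd_part_odd h2q, not_two_pow_of_pow h2q⟩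
  have hinvc : (f x0 : G) * q ^ 2 ^ k * (f x0 : G)⁻¹ = (q ^ 2 ^ k)⁻¹ :=
    conj_pow_inv (invol_conj hu hv) _
  exact not_mem_niler_right (not_nilpotent_dihedral_odd hu hinvc (not_two_pow_of_pow h2q))

end Vertex

end NilSC

open NilSC in
theorem nilpotentGraph_not_selfComplementary {G : Type*} [Group G] [Finite G]
    (hG : ¬ Group.IsNilpotent G) :
    ¬ ∃ f : {x : G // x ∉ nilpotentizer G} ≃ {x : G // x ∉ nilpotentizer G},
        ∀ x y : {x : G // x ∉ nilpotentizer G}, x ≠ y →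
          (Group.IsNilpotent (Subgroup.closure ({(x : G), (y : G)} : Set G)) ↔
            ¬ Group.IsNilpotent (Subgroup.closure ({(f x : G), (f y : G)} : Set G))) := by
  rintro ⟨f, hf⟩
  have hf' : ∀ x y : {x : G // x ∉ nilpotentizer G}, x ≠ y →
      (Group.IsNilpotent (Subgroup.closure ({(x : G), (y : G)} : Set G)) ↔
        ¬ Group.IsNilpotent (Subgroup.closure ({(f.symm x : G), (f.symm y : G)} : Set G))) := by
    intro x y hxy
    have hne : f.symm x ≠ f.symm y := fun e => hxy (f.symm.injective e)
    have h := hf (f.symm x) (f.symm y) hne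
    rw [f.apply_symm_apply, f.apply_symm_apply] at h
    exact iff_not_comm.mp h
  obtain ⟨c, hcn, hcodd, h2c⟩ := exists_odd_vertex hG f hf
  have hcsq : c * c ≠ 1 := sq_ne_of_not_two_pow h2c
  have hc1 : c ≠ 1 := ne_one_of_not_two_pow h2c
  set x1 : {x : G // x ∉ nilpotentizer G} := ⟨c, hcn⟩ with hx1
  set x1' : {x : G // x ∉ nilpotentizer G} := ⟨c⁻¹, inv_not_mem_niler hcn⟩ with hx1'
  have hne1 : x1 ≠ x1' := fun e => ne_inv_of_sq hcsq (congrArg Subtype.val e)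
  have hu1 : (f x1 : G) * (f x1 : G) = 1 := claimC f hf x1 hcsq
  have hv1 : (f x1' : G) * (f x1' : G) = 1 := claimC f hf x1' (inv_sq_ne hcsq)
  have hnu1v1 : ¬ Group.IsNilpotent
      (Subgroup.closure ({(f x1 : G), (f x1' : G)} : Set G)) := by
    apply (hf x1 x1' hne1).mp
    show Group.IsNilpotent (Subgroup.closure ({c, c⁻¹} : Set G))
    exact nilpotent_self_inv c
  set q1 : G := (f x1 : G) * (f x1' : G) with hq1
  have h2q1 : ¬ ∃ m : ℕ, q1 ^ 2 ^ m = 1 := invol_pair_facts hu1 hv1 hnu1v1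
  have hq1sq : q1 * q1 ≠ 1 := sq_ne_of_not_two_pow h2q1
  have hnq1 : ¬ Group.IsNilpotent (Subgroup.closure ({(f x1 : G), q1} : Set G)) := by
    intro h
    apply hnu1v1
    rw [hq1, cl_mul] at h
    exact h
  have hq1n : q1 ∉ nilpotentizer G := not_mem_niler_right hnq1
  set W : {x : G // x ∉ nilpotentizer G} := ⟨q1, hq1n⟩ with hWdef
  set W' : {x : G // x ∉ nilpotentizer G} := ⟨q1⁻¹, inv_not_mem_niler hq1n⟩ with hW'def
  have hWW' : W ≠ W' := fun e => ne_inv_of_sq hq1sq (congrArg Subtype.val e)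
  set z := f.symm W with hz_def
  set z' := f.symm W' with hz'_def
  have hfz : f z = W := f.apply_symm_apply W
  have hfz' : f z' = W' := f.apply_symm_apply W'
  have hzz' : z ≠ z' := fun e => hWW' (by rw [← hfz, ← hfz', e])
  have hzsq : (z : G) * (z : G) = 1 := claimC f.symm hf' W hq1sq
  have hz'sq : (z' : G) * (z' : G) = 1 := claimC f.symm hf' W' (inv_sq_ne hq1sq)
  have hnzz' : ¬ Group.IsNilpotent (Subgroup.closure ({(z : G), (z' : G)} : Set G)) := by
    have h0 := (hf' W W' hWW').mp (nilpotent_self_inv q1)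
    rw [← hz_def, ← hz'_def] at h0
    exact h0
  have hv1ne1 : (f x1' : G) ≠ 1 := fun e => (f x1').2 (by rw [e]; exact one_mem_niler)
  have hx1nez : x1 ≠ z := by
    intro e
    have h1 : (f x1 : G) = q1 := by rw [e, hfz]
    rw [hq1] at h1
    exact hv1ne1 (left_eq_mul.mp h1)
  have hx1nez' : x1 ≠ z' := by
    intro e
    have h1 : (f x1 : G) = q1⁻¹ := by rw [e, hfz']
    have h2 : q1 = (f x1 : G) := by rw [← inv_inv q1, ← h1, inv_eq_self hu1]
    rw [hq1] at h2
    exact hv1ne1 (left_eq_mul.mp h2.symm)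
  have hx1z : Group.IsNilpotent (Subgroup.closure ({c, (z : G)} : Set G)) := by
    have hiff := hf x1 z hx1nez
    rw [hfz] at hiff
    exact hiff.mpr hnq1
  have hx1z' : Group.IsNilpotent (Subgroup.closure ({c, (z' : G)} : Set G)) := by
    have hiff := hf x1 z' hx1nez'
    rw [hfz'] at hiff
    refine hiff.mpr ?_
    intro h
    apply hnq1
    rwa [cl_inv_right] at h
  have hrow : ∀ t : {x : G // x ∉ nilpotentizer G}, t ≠ z → t ≠ z' →
      (Group.IsNilpotent (Subgroup.closure ({(z : G), (t : G)} : Set G)) ↔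
        Group.IsNilpotent (Subgroup.closure ({(z' : G), (t : G)} : Set G))) := by
    intro t h1 h2
    have ha := hf z t (Ne.symm h1)
    have hb := hf z' t (Ne.symm h2)
    rw [hfz] at ha
    rw [hfz'] at hb
    rw [show ((W : G)) = q1 from rfl] at ha
    rw [show ((W' : G)) = q1⁻¹ from rfl] at hb
    rw [cl_inv_left] at hb
    rw [ha, hb]
  set r : G := (z : G) * (z' : G) with hr
  have hinv_z : (z : G) * r * (z : G)⁻¹ = r⁻¹ := invol_conj hzsq hz'sq
  have hinv_z' : (z' : G) * r * (z' : G)⁻¹ = r⁻¹ := invol_conj_right hzsq hz'sq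
  have h2r : ¬ ∃ m : ℕ, r ^ 2 ^ m = 1 := invol_pair_facts hzsq hz'sq hnzz'
  set n := orderOf r with hn
  have hn0 : n ≠ 0 := by rw [hn]; exact (orderOf_pos r).ne'
  set kk := n.factorization 2 with hkk
  set τ := n / 2 ^ kk with hτ
  have hmulkτ : 2 ^ kk * τ = n := Nat.ordProj_mul_ordCompl_eq_self n 2
  have hτodd : ¬ 2 ∣ τ := Nat.not_dvd_ordCompl Nat.prime_two hn0
  have hτdvd : τ ∣ n := Nat.ordCompl_dvd n 2
  have hτpos : τ ≠ 0 := by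
    intro e
    rw [e, mul_zero] at hmulkτ
    exact hn0 hmulkτ.symm
  have hrn : r ^ n = 1 := by rw [hn]; exact pow_orderOf_eq_one r
  have hτ1 : τ ≠ 1 := by
    intro e
    apply h2r
    refine ⟨kk, ?_⟩
    have h3 : (2:ℕ) ^ kk = n := by rw [← hmulkτ, e, mul_one]
    rw [h3]
    exact hrn
  have hg2pow : (r ^ τ) ^ 2 ^ kk = 1 := by
    rw [← pow_mul]
    have h3 : τ * 2 ^ kk = n := by rw [Nat.mul_comm]; exact hmulkτ
    rw [h3]
    exact hrn
  by_cases hA : r ^ τ = 1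
  · -- odd case: use the odd-order element c, which commutes with z and z'
    have hcomm : ∀ zc : G, zc * zc = 1 →
        Group.IsNilpotent (Subgroup.closure ({c, zc} : Set G)) → zc * c = c * zc := by
      intro zc hzc hnil
      have hzmem : zc ∈ closure ({c, zc} : Set G) := mem_cl_right _ _
      have hcmem : c ∈ closure ({c, zc} : Set G) := mem_cl_left _ _
      have h2el : (⟨zc, hzmem⟩ : closure ({c, zc} : Set G)) ^ 2 ^ 1 = 1 := by
        apply Subtype.ext
        rw [SubmonoidClass.coe_pow]
        have e : (2:ℕ) ^ 1 = 2 := by norm_num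
        rw [e, pow_two]
        simpa using hzc
      have hoddel : Odd (orderOf (⟨c, hcmem⟩ : closure ({c, zc} : Set G))) := by
        rw [Subgroup.orderOf_mk]; exact hcodd
      exact congrArg Subtype.val
        (commute_of_nilpotent hnil ⟨zc, hzmem⟩ ⟨c, hcmem⟩ ⟨1, h2el⟩ hoddel)
    have hcz : (z : G) * c = c * (z : G) := hcomm _ hzsq hx1z
    have hcz' : (z' : G) * c = c * (z' : G) := hcomm _ hz'sq hx1z'
    have hNilzt : Group.IsNilpotent
        (Subgroup.closure ({(z : G), (z : G) * c} : Set G)) := by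
      rw [cl_mul]
      exact nilpotent_of_commute hcz
    have hid : ((z : G) * c) * (z' : G) * ((z : G) * c)⁻¹ * ((z' : G))⁻¹ = r ^ 2 := by
      rw [pow_two, hr, mul_inv_rev, inv_eq_self hzsq, inv_eq_self hz'sq]
      calc (z : G) * c * (z' : G) * (c⁻¹ * (z : G)) * (z' : G)
          = (z : G) * (c * (z' : G)) * c⁻¹ * (z : G) * (z' : G) := by group
        _ = (z : G) * ((z' : G) * c) * c⁻¹ * (z : G) * (z' : G) := by rw [← hcz']
        _ = (z : G) * (z' : G) * ((z : G) * (z' : G)) := by group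
    have hr2mem : r ^ 2 ∈ closure ({(z' : G), (z : G) * c} : Set G) := by
      rw [← hid]
      exact mul_mem (mul_mem (mul_mem (mem_cl_right _ _) (mem_cl_left _ _))
        (inv_mem (mem_cl_right _ _))) (inv_mem (mem_cl_left _ _))
    have h2r2 : ¬ ∃ m : ℕ, (r ^ 2) ^ 2 ^ m = 1 := by
      rintro ⟨m, hm⟩
      apply h2r
      refine ⟨m + 1, ?_⟩
      rw [← pow_mul] at hm
      have h3 : (2:ℕ) ^ (m + 1) = 2 * 2 ^ m := by ring
      rw [h3]
      exact hm
    have hnz'r2 := not_nilpotent_dihedral_odd hz'sq (conj_pow_inv hinv_z' 2) h2r2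
    have hnb : ¬ Group.IsNilpotent
        (Subgroup.closure ({(z' : G), (z : G) * c} : Set G)) := fun h =>
      hnz'r2 (subnil (cl_le_iff.mpr ⟨mem_cl_left _ _, hr2mem⟩) h)
    have htn : (z : G) * c ∉ nilpotentizer G := not_mem_niler_right hnb
    have htz : (⟨(z : G) * c, htn⟩ : {x : G // x ∉ nilpotentizer G}) ≠ z := by
      intro e
      have h1 : (z : G) * c = (z : G) := congrArg Subtype.val e
      exact hc1 (left_eq_mul.mp h1.symm)
    have htz' : (⟨(z : G) * c, htn⟩ : {x : G // x ∉ nilpotentizer G}) ≠ z' := by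
      intro e
      apply hnb
      have h1 : (z : G) * c = (z' : G) := congrArg Subtype.val e
      rw [h1]
      exact nilpotent_pair_self _
    exact absurd ((hrow ⟨(z : G) * c, htn⟩ htz htz').mp hNilzt) hnb
  · -- even case: break the twin pair with the reflection z * r^τ
    have h2g2 : ∃ m : ℕ, (r ^ τ) ^ 2 ^ m = 1 := ⟨kk, hg2pow⟩
    have hNilzt : Group.IsNilpotent
        (Subgroup.closure ({(z : G), (z : G) * r ^ τ} : Set G)) := by
      rw [cl_mul]
      exact nilpotent_dihedral_two hzsq (conj_pow_inv hinv_z τ) h2g2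
    have hτsucc : τ - 1 + 1 = τ := Nat.succ_pred_eq_of_pos (Nat.pos_of_ne_zero hτpos)
    have hc'eq : (z' : G) * ((z : G) * r ^ τ) = r ^ (τ - 1) := by
      have h1 : (z' : G) * (z : G) = r⁻¹ := by
        rw [hr, mul_inv_rev, inv_eq_self hzsq, inv_eq_self hz'sq]
      have h4 : r ^ τ = r * r ^ (τ - 1) := by
        conv_lhs => rw [← hτsucc]
        rw [pow_succ']
      rw [← mul_assoc, h1, h4]
      group
    have hc'mem : r ^ (τ - 1) ∈ closure ({(z' : G), (z : G) * r ^ τ} : Set G) := by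
      rw [← hc'eq]
      exact mul_mem (mem_cl_left _ _) (mem_cl_right _ _)
    have h2c' : ¬ ∃ m : ℕ, (r ^ (τ - 1)) ^ 2 ^ m = 1 := by
      rintro ⟨m, hm⟩
      rw [← pow_mul] at hm
      have hdvd2 : n ∣ (τ - 1) * 2 ^ m := by
        rw [hn]
        exact orderOf_dvd_of_pow_eq_one hm
      have hτd : τ ∣ (τ - 1) * 2 ^ m := hτdvd.trans hdvd2
      have hcop : Nat.Coprime τ (2 ^ m) :=
        Nat.Coprime.pow_right m
          (Nat.coprime_comm.mp ((Nat.prime_two.coprime_iff_not_dvd).mpr hτodd))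
      have hτd2 : τ ∣ (τ - 1) := hcop.dvd_of_dvd_mul_right hτd
      have h5 : τ - 1 = 0 := Nat.eq_zero_of_dvd_of_lt hτd2 (by omega)
      omega
    have hnz'c' := not_nilpotent_dihedral_odd hz'sq (conj_pow_inv hinv_z' (τ - 1)) h2c'
    have hnb : ¬ Group.IsNilpotent
        (Subgroup.closure ({(z' : G), (z : G) * r ^ τ} : Set G)) := fun h =>
      hnz'c' (subnil (cl_le_iff.mpr ⟨mem_cl_left _ _, hc'mem⟩) h)
    have htn : (z : G) * r ^ τ ∉ nilpotentizer G := not_mem_niler_right hnb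
    have htz : (⟨(z : G) * r ^ τ, htn⟩ : {x : G // x ∉ nilpotentizer G}) ≠ z := by
      intro e
      have h1 : (z : G) * r ^ τ = (z : G) := congrArg Subtype.val e
      exact hA (left_eq_mul.mp h1.symm)
    have htz' : (⟨(z : G) * r ^ τ, htn⟩ : {x : G // x ∉ nilpotentizer G}) ≠ z' := by
      intro e
      apply hnb
      have h1 : (z : G) * r ^ τ = (z' : G) := congrArg Subtype.val e
      rw [h1]
      exact nilpotent_pair_self _
    exact absurd ((hrow ⟨(z : G) * r ^ τ, htn⟩ htz htz').mp hNilzt) hnb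
end

section
/- Let n ≥ 3 be an odd integer and D_n the dihedral group of order 2n. Then the nilpotent graph of D_n has exactly n + 1 connected components: one component consisting of the n − 1 nontrivial rotations, and n isolated vertices given by the n reflections. -/
open Subgroup DihedralGroup

-- nontrivial nilpotent group has nontrivial center
lemma center_ne_bot_of_isNilpotent {G : Type*} [Group G] [Nontrivial G]
    (h : Group.IsNilpotent G) : Subgroup.center G ≠ ⊥ := by
  intro hc
  have key : ∀ k, Subgroup.upperCentralSeries G k = ⊥ := by
    intro k
    induction k with
    | zero => exact Subgroup.upperCentralSeries_zero G
    | succ k ih =>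
      ext x
      rw [Subgroup.mem_upperCentralSeries_succ_iff]
      simp only [ih, Subgroup.mem_bot]
      constructor
      · intro hx
        have hxc : x ∈ Subgroup.center G := by
          rw [Subgroup.mem_center_iff]
          intro y
          have := hx y
          rw [commutatorElement_def, mul_inv_eq_one, mul_inv_eq_iff_eq_mul] at this
          rw [this]
        rw [hc, Subgroup.mem_bot] at hxc
        exact hxc
      · rintro rfl
        intro y; group
  obtain ⟨m, hm⟩ := h
  obtain ⟨a, b, hab⟩ := exists_pair_ne G
  have : a ∈ Subgroup.upperCentralSeries G m := hm ▸ Subgroup.mem_top a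
  have hb : b ∈ Subgroup.upperCentralSeries G m := hm ▸ Subgroup.mem_top b
  rw [key m, Subgroup.mem_bot] at this hb
  exact hab (this.trans hb.symm)


lemma two_eq_zero_imp {n : ℕ} (hodd : Odd n) {k : ZMod n} (h : k + k = 0) : k = 0 := by
  have h2 : IsUnit (2 : ZMod n) := (ZMod.isUnit_iff_coprime 2 n).2 (hodd.coprime_two_left)
  have h3 : (2 : ZMod n) * k = 2 * 0 := by rw [two_mul, h, mul_zero]
  exact h2.mul_left_cancel h3

lemma not_nilpotent_of_mem {n : ℕ} (hn : 3 ≤ n) (hodd : Odd n) {i j : ZMod n} (hj : j ≠ 0)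
    (H : Subgroup (DihedralGroup n)) (hs : sr i ∈ H) (hr : r j ∈ H) :
    ¬ Group.IsNilpotent H := by
  haveI : NeZero n := ⟨by omega⟩
  intro hnil
  have hne1 : (r j : DihedralGroup n) ≠ 1 := by
    rw [one_def]; intro h; exact hj (r.inj h)
  haveI : Nontrivial H := (Subgroup.nontrivial_iff_exists_ne_one H).2 ⟨r j, hr, hne1⟩
  have hcen := center_ne_bot_of_isNilpotent hnil
  rw [Subgroup.ne_bot_iff_exists_ne_one] at hcen
  obtain ⟨⟨⟨z, hzH⟩, hzc⟩, hzne⟩ := hcen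
  rw [Subgroup.mem_center_iff] at hzc
  have hcs : sr i * z = z * sr i := by
    have := hzc ⟨sr i, hs⟩
    exact congrArg Subtype.val this
  have hcr : r j * z = z * r j := by
    have := hzc ⟨r j, hr⟩
    exact congrArg Subtype.val this
  have hz1 : z ≠ 1 := by
    intro h; apply hzne; exact Subtype.ext (Subtype.ext h)
  cases z with
  | r k =>
    rw [sr_mul_r, r_mul_sr] at hcs
    have h4 : i + k = i - k := by simpa using hcs
    have hk : k + k = 0 := by linear_combination h4
    apply hz1
    rw [one_def, two_eq_zero_imp hodd hk]
  | sr k =>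
    rw [r_mul_sr, sr_mul_r] at hcr
    have : k - j = k + j := by simpa using hcr
    have : j + j = 0 := by linear_combination -this
    exact hj (two_eq_zero_imp hodd this)

lemma isNilpotent_closure_of_le_zpowers {G : Type*} [Group G] {s : Set G} {g : G}
    (hs : s ⊆ Subgroup.zpowers g) : Group.IsNilpotent (Subgroup.closure s) := by
  have hle : Subgroup.closure s ≤ Subgroup.zpowers g := (Subgroup.closure_le _).2 hs
  haveI : IsMulCommutative (Subgroup.closure s) := by
    constructor; constructor
    intro a b
    obtain ⟨k, hk⟩ := Subgroup.mem_zpowers_iff.1 (hle a.2)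
    obtain ⟨m, hm⟩ := Subgroup.mem_zpowers_iff.1 (hle b.2)
    ext
    show (a : G) * b = (b : G) * a
    rw [← hk, ← hm, ← zpow_add, ← zpow_add, add_comm]
  exact @CommGroup.isNilpotent _ { (inferInstance : Group (Subgroup.closure s)) with mul_comm := fun a b => Std.Commutative.comm a b }

lemma isNilpotent_closure_r {n : ℕ} [NeZero n] (i j : ZMod n) :
    Group.IsNilpotent (Subgroup.closure ({(r i : DihedralGroup n), r j} : Set _)) := by
  apply isNilpotent_closure_of_le_zpowers (g := (r 1 : DihedralGroup n))
  have key : ∀ k : ZMod n, (r k : DihedralGroup n) ∈ Subgroup.zpowers (r 1 : DihedralGroup n) := by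
    intro k
    exact ⟨(k.val : ℤ), by push_cast [zpow_natCast, r_one_pow]; simp [ZMod.natCast_val, ZMod.cast_id]⟩
  rintro x (rfl | rfl) <;> [exact key i; exact key j]

lemma isNilpotent_closure_one {G : Type*} [Group G] (h : G) :
    Group.IsNilpotent (Subgroup.closure ({1, h} : Set G)) := by
  apply isNilpotent_closure_of_le_zpowers (g := h)
  rintro x (rfl | rfl)
  · exact Subgroup.one_mem _
  · exact Subgroup.mem_zpowers x

section Main

open Subgroup DihedralGroup SimpleGraph

set_option maxHeartbeats 1000000 in
lemma nilpotentizer_dihedral_eq {n : ℕ} (hn : 3 ≤ n) (hodd : Odd n) :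
    nilpotentizer (DihedralGroup n) = {1} := by
  haveI : NeZero n := ⟨by omega⟩
  haveI : Fact (1 < n) := ⟨by omega⟩
  ext x
  simp only [Set.mem_singleton_iff]
  constructor
  · intro hx
    by_contra hx1
    cases x with
    | r i =>
      have hi : i ≠ 0 := fun h => hx1 (by rw [h, ← one_def])
      have h1 := hx (sr 0)
      have h2 : (sr 0 : DihedralGroup n) ∈ Subgroup.closure ({r i, sr 0} : Set (DihedralGroup n)) :=
        Subgroup.subset_closure (Set.mem_insert_of_mem _ rfl)
      have h3 : (r i : DihedralGroup n) ∈ Subgroup.closure ({r i, sr 0} : Set (DihedralGroup n)) :=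
        Subgroup.subset_closure (Set.mem_insert _ _)
      exact not_nilpotent_of_mem hn hodd hi _ h2 h3 h1
    | sr i =>
      have h1 : (1 : ZMod n) ≠ 0 := one_ne_zero
      have hh1 := hx (r 1)
      have h2 : (sr i : DihedralGroup n) ∈ Subgroup.closure ({sr i, r 1} : Set (DihedralGroup n)) :=
        Subgroup.subset_closure (Set.mem_insert _ _)
      have h3 : (r 1 : DihedralGroup n) ∈ Subgroup.closure ({sr i, r 1} : Set (DihedralGroup n)) :=
        Subgroup.subset_closure (Set.mem_insert_of_mem _ rfl)
      exact not_nilpotent_of_mem hn hodd h1 _ h2 h3 hh1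
  · rintro rfl
    intro h
    exact isNilpotent_closure_one h

set_option maxHeartbeats 1600000 in
theorem nilpotentGraph_dihedral_odd (n : ℕ) (hn : 3 ≤ n) (hodd : Odd n) :
    Nat.card ((nilpotentGraph (DihedralGroup n)).ConnectedComponent) = n + 1 ∧
    (∀ x : {x : DihedralGroup n // x ∉ nilpotentizer (DihedralGroup n)},
      (∃ i : ZMod n, (x : DihedralGroup n) = DihedralGroup.sr i) →
        (nilpotentGraph (DihedralGroup n)).neighborSet x = ∅) ∧
    (∀ x y : {x : DihedralGroup n // x ∉ nilpotentizer (DihedralGroup n)},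
      (∃ i : ZMod n, (x : DihedralGroup n) = DihedralGroup.r i) →
        (∃ j : ZMod n, (y : DihedralGroup n) = DihedralGroup.r j) →
          (nilpotentGraph (DihedralGroup n)).Reachable x y) := by
  haveI : NeZero n := ⟨by omega⟩
  haveI : Fact (1 < n) := ⟨by omega⟩
  have hmem : ∀ x : DihedralGroup n, x ∉ nilpotentizer (DihedralGroup n) ↔ x ≠ 1 := by
    intro x; rw [nilpotentizer_dihedral_eq hn hodd]; rfl
  -- isolated reflections
  have isolated : ∀ x : {x : DihedralGroup n // x ∉ nilpotentizer (DihedralGroup n)},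
      (∃ i : ZMod n, (x : DihedralGroup n) = sr i) →
        (nilpotentGraph (DihedralGroup n)).neighborSet x = ∅ := by
    rintro x ⟨i, hi⟩
    ext y
    simp only [mem_neighborSet, Set.mem_empty_iff_false, iff_false]
    rintro (⟨hne, hnil⟩ : x ≠ y ∧ Group.IsNilpotent (Subgroup.closure ({(x : DihedralGroup n), (y : DihedralGroup n)} : Set _)))
    cases hy : (y : DihedralGroup n) with
    | r j =>
      have hj : j ≠ 0 := by
        intro h
        exact (hmem y.1).1 y.2 (by rw [hy, h, ← one_def])
      rw [hi, hy] at hnil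
      have h2 : (sr i : DihedralGroup n) ∈ Subgroup.closure ({sr i, r j} : Set (DihedralGroup n)) :=
        Subgroup.subset_closure (Set.mem_insert _ _)
      have h3 : (r j : DihedralGroup n) ∈ Subgroup.closure ({sr i, r j} : Set (DihedralGroup n)) :=
        Subgroup.subset_closure (Set.mem_insert_of_mem _ rfl)
      exact not_nilpotent_of_mem hn hodd hj _ h2 h3 hnil
    | sr j =>
      have hij : j - i ≠ 0 := by
        intro h
        apply hne
        apply Subtype.ext
        rw [hi, hy, sub_eq_zero.1 h]
      rw [hi, hy] at hnil
      have h2 : (sr i : DihedralGroup n) ∈ Subgroup.closure ({sr i, sr j} : Set (DihedralGroup n)) :=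
        Subgroup.subset_closure (Set.mem_insert _ _)
      have h2' : (sr j : DihedralGroup n) ∈ Subgroup.closure ({sr i, sr j} : Set (DihedralGroup n)) :=
        Subgroup.subset_closure (Set.mem_insert_of_mem _ rfl)
      have h3 : (r (j - i) : DihedralGroup n) ∈ Subgroup.closure ({sr i, sr j} : Set (DihedralGroup n)) := by
        have heq : (r (j - i) : DihedralGroup n) = sr i * sr j := (sr_mul_sr i j).symm
        rw [heq]
        exact Subgroup.mul_mem _ h2 h2'
      exact not_nilpotent_of_mem hn hodd hij _ h2 h3 hnil
  -- rotations mutually reachable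
  have rot_reach : ∀ x y : {x : DihedralGroup n // x ∉ nilpotentizer (DihedralGroup n)},
      (∃ i : ZMod n, (x : DihedralGroup n) = r i) →
        (∃ j : ZMod n, (y : DihedralGroup n) = r j) →
          (nilpotentGraph (DihedralGroup n)).Reachable x y := by
    rintro x y ⟨i, hi⟩ ⟨j, hj⟩
    by_cases hxy : x = y
    · rw [hxy]
    · refine Adj.reachable (show x ≠ y ∧ Group.IsNilpotent (Subgroup.closure ({(x : DihedralGroup n), (y : DihedralGroup n)} : Set _)) from ⟨hxy, ?_⟩)
      rw [hi, hj]
      exact isNilpotent_closure_r i j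
  refine ⟨?_, isolated, rot_reach⟩
  -- counting components
  have h1ne : ((1 : ZMod n) : ZMod n) ≠ 0 := one_ne_zero
  have hv1 : (r 1 : DihedralGroup n) ∉ nilpotentizer (DihedralGroup n) := by
    rw [hmem]
    intro h
    rw [one_def] at h
    exact h1ne (r.inj h)
  have hvs : ∀ i : ZMod n, (sr i : DihedralGroup n) ∉ nilpotentizer (DihedralGroup n) := by
    intro i
    rw [hmem, one_def]
    intro h; cases h
  set V := {x : DihedralGroup n // x ∉ nilpotentizer (DihedralGroup n)} with hV
  let v1 : V := ⟨r 1, hv1⟩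
  let vs : ZMod n → V := fun i => ⟨sr i, hvs i⟩
  let f : Option (ZMod n) → (nilpotentGraph (DihedralGroup n)).ConnectedComponent :=
    fun o => Option.rec ((nilpotentGraph (DihedralGroup n)).connectedComponentMk v1)
      (fun i => (nilpotentGraph (DihedralGroup n)).connectedComponentMk (vs i)) o
  have iso_eq : ∀ (x y : V), (nilpotentGraph (DihedralGroup n)).neighborSet x = ∅ →
      (nilpotentGraph (DihedralGroup n)).Reachable x y → y = x := by
    intro x y hx hr
    obtain ⟨w⟩ := hr
    cases w with
    | nil => rfl
    | cons h p =>
      exfalso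
      have hb := (SimpleGraph.mem_neighborSet _ _ _).mpr h
      rw [hx] at hb
      exact hb
  have hbij : Function.Bijective f := by
    constructor
    · rintro (_ | i) (_ | j) hf
      · rfl
      · exfalso
        have hr := (SimpleGraph.ConnectedComponent.eq.1 hf).symm
        have h2 := congrArg Subtype.val (iso_eq (vs j) v1 (isolated (vs j) ⟨j, rfl⟩) hr)
        simp only [v1, vs] at h2
        simp at h2
      · exfalso
        have hr := SimpleGraph.ConnectedComponent.eq.1 hf
        have h2 := congrArg Subtype.val (iso_eq (vs i) v1 (isolated (vs i) ⟨i, rfl⟩) hr)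
        simp only [v1, vs] at h2
        simp at h2
      · have hr := SimpleGraph.ConnectedComponent.eq.1 hf
        have h2 := congrArg Subtype.val (iso_eq (vs i) (vs j) (isolated (vs i) ⟨i, rfl⟩) hr)
        simp only [vs, sr.injEq] at h2
        rw [h2]
    · intro c
      induction c using SimpleGraph.ConnectedComponent.ind with
      | _ x =>
        cases hx : (x : DihedralGroup n) with
        | r i =>
          exact ⟨none, ConnectedComponent.sound (rot_reach v1 x ⟨1, rfl⟩ ⟨i, hx⟩)⟩
        | sr i =>
          exact ⟨some i, congrArg _ (Subtype.ext hx.symm)⟩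
  have := Nat.card_eq_of_bijective f hbij
  rw [← this, Finite.card_option, Nat.card_zmod]

end Main
end

section
/- Let G be a finite non-nilpotent group such that nil(G) has even order. Then the nilpotent graph of G is non-Eulerian; more precisely, every vertex x ∈ G \ nil(G) has odd degree. -/
open Subgroup Pointwise


section Hyper
variable {G : Type*} [Group G]

lemma ucs_stab_of_eq {k : ℕ} (h : Subgroup.upperCentralSeries G k = Subgroup.upperCentralSeries G (k+1)) :
    ∀ m, k ≤ m → Subgroup.upperCentralSeries G m = Subgroup.upperCentralSeries G k := by
  intro m hm
  induction m with
  | zero =>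
    have : k = 0 := by omega
    rw [this]
  | succ n ih =>
    rcases Nat.lt_or_ge k (n+1) with hlt | hge
    · have hkn : k ≤ n := by omega
      have hn := ih hkn
      ext x
      constructor
      · intro hx
        rw [h, Subgroup.mem_upperCentralSeries_succ_iff]
        intro y
        rw [← hn]
        exact Subgroup.mem_upperCentralSeries_succ_iff.mp hx y
      · intro hx
        rw [Subgroup.mem_upperCentralSeries_succ_iff]
        intro y
        rw [hn]
        rw [h, Subgroup.mem_upperCentralSeries_succ_iff] at hx
        exact hx y
    · have : k = n + 1 := by omega
      simp [this]

lemma ucs_le_hypercenter [Finite G] (n : ℕ) :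
    Subgroup.upperCentralSeries G n ≤ hypercenter G := by
  -- find stabilization point
  have hex : ∃ k ≤ Nat.card G, Subgroup.upperCentralSeries G k = Subgroup.upperCentralSeries G (k+1) := by
    by_contra hc
    push_neg at hc
    have key : ∀ i, i ≤ Nat.card G + 1 → i ≤ Nat.card (Subgroup.upperCentralSeries G i) := by
      intro i
      induction i with
      | zero => intro _; exact Nat.zero_le _
      | succ j ih =>
        intro hj
        have hj' : j ≤ Nat.card G := by omega
        have h1 : Subgroup.upperCentralSeries G j < Subgroup.upperCentralSeries G (j+1) :=
          lt_of_le_of_ne (Subgroup.upperCentralSeries_mono G (Nat.le_succ j)) (hc j hj')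
        have h2 : Nat.card (Subgroup.upperCentralSeries G j) < Nat.card (Subgroup.upperCentralSeries G (j+1)) := by
          rw [← SetLike.coe_sort_coe (Subgroup.upperCentralSeries G j),
            ← SetLike.coe_sort_coe (Subgroup.upperCentralSeries G (j+1)),
            Nat.card_coe_set_eq, Nat.card_coe_set_eq]
          exact Set.ncard_lt_ncard (SetLike.coe_ssubset_coe.mpr h1) (Set.toFinite _)
        have := ih (by omega)
        omega
    have h1 := key (Nat.card G + 1) le_rfl
    have h2 : Nat.card (Subgroup.upperCentralSeries G (Nat.card G + 1)) ≤ Nat.card G :=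
      Nat.card_le_card_of_injective _ (Subgroup.subtype_injective _)
    omega
  obtain ⟨k, hk, heq⟩ := hex
  rcases le_or_gt n (Nat.card G) with h | h
  · exact Subgroup.upperCentralSeries_mono G h
  · have h1 := ucs_stab_of_eq heq n (by omega)
    have h2 := ucs_stab_of_eq heq (Nat.card G) hk
    rw [hypercenter, h2, ← h1]

lemma ucs_mem_of_mem_subgroup {M : Subgroup G} :
    ∀ (n : ℕ) (x : M), (x : G) ∈ Subgroup.upperCentralSeries G n → x ∈ Subgroup.upperCentralSeries M n := by
  intro n
  induction n with
  | zero =>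
    intro x hx
    have : (x : G) = 1 := by simpa using hx
    have : x = 1 := Subtype.ext this
    simp [this, mem_bot]
  | succ j ih =>
    intro x hx
    rw [Subgroup.mem_upperCentralSeries_succ_iff]
    intro y
    rw [Subgroup.mem_upperCentralSeries_succ_iff] at hx
    exact ih _ (hx (y : G))

lemma nilpotent_of_lower_le_upper :
    ∀ (m k : ℕ), Subgroup.lowerCentralSeries (⊤ : Subgroup G) k ≤ Subgroup.upperCentralSeries G m →
      Subgroup.lowerCentralSeries (⊤ : Subgroup G) (k + m) = ⊥ := by
  intro m
  induction m with
  | zero =>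
      intro k h
      simpa using le_bot_iff.mp h
  | succ j ih =>
      intro k h
      have hstep : Subgroup.lowerCentralSeries (⊤ : Subgroup G) (k+1) ≤ Subgroup.upperCentralSeries G j := by
        rw [Subgroup.lowerCentralSeries_succ]
        apply (closure_le _).mpr
        rintro w ⟨p, hp, q, -, rfl⟩
        exact Subgroup.mem_upperCentralSeries_succ_iff.mp (h hp) q
      have := ih (k+1) hstep
      rw [show k + (j+1) = (k+1) + j by omega]
      exact this

lemma nilpotent_of_lcs_le_ucs {k m : ℕ} (h : Subgroup.lowerCentralSeries (⊤ : Subgroup G) k ≤ Subgroup.upperCentralSeries G m) :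
    Group.IsNilpotent G :=
  Subgroup.nilpotent_iff_lowerCentralSeries.mpr ⟨k + m, nilpotent_of_lower_le_upper m k h⟩

lemma hypercenter_sup_nilpotent [Finite G] (A : Subgroup G) (hA : Group.IsNilpotent A) :
    Group.IsNilpotent ↥(hypercenter G ⊔ A) := by
  set M := hypercenter G ⊔ A with hM
  set N := (hypercenter G).subgroupOf M with hN
  haveI : Group.IsNilpotent ↥A := hA
  -- M ⧸ N is nilpotent
  let f : ↥A →* ↥M ⧸ N := (QuotientGroup.mk' N).comp (inclusion le_sup_right)
  have hfsurj : Function.Surjective f := by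
    intro q
    obtain ⟨m, rfl⟩ := QuotientGroup.mk'_surjective N q
    have hm : (m : G) ∈ ((hypercenter G : Set G) * (A : Set G)) := by
      rw [← Subgroup.normal_mul]
      exact m.2
    obtain ⟨z, hz, a, ha, hza⟩ := hm
    refine ⟨⟨a, ha⟩, ?_⟩
    set aM : ↥M := inclusion le_sup_right ⟨a, ha⟩ with haM
    have haMcoe : (aM : G) = a := rfl
    show (QuotientGroup.mk' N) aM = (QuotientGroup.mk' N) m
    rw [QuotientGroup.mk'_eq_mk']
    refine ⟨aM⁻¹ * m, ?_, mul_inv_cancel_left aM m⟩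
    rw [mem_subgroupOf]
    have hza' : z * a = (m : G) := hza
    have hco : ((aM⁻¹ * m : ↥M) : G) = a⁻¹ * (z * a) := by
      rw [hza']
      push_cast [haMcoe]
      rfl
    rw [hco, ← mul_assoc]
    have := (inferInstance : (hypercenter G).Normal).conj_mem z hz a⁻¹
    simpa using this
  have h1 : Group.IsNilpotent (↥M ⧸ N) := Group.nilpotent_of_surjective f hfsurj
  obtain ⟨k, hk⟩ := Subgroup.nilpotent_iff_lowerCentralSeries.mp h1
  have h3 : Subgroup.lowerCentralSeries (⊤ : Subgroup ↥M) k ≤ N := by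
    intro y hy
    have := Subgroup.lowerCentralSeries.map (QuotientGroup.mk' N) k (mem_map_of_mem _ hy)
    rw [hk, mem_bot] at this
    rwa [← QuotientGroup.ker_mk' N, MonoidHom.mem_ker]
  have h2 : N ≤ Subgroup.upperCentralSeries ↥M (Nat.card G) := by
    intro y hy
    exact ucs_mem_of_mem_subgroup (Nat.card G) y hy
  exact nilpotent_of_lcs_le_ucs (h3.trans h2)

lemma isNilpotent_of_le {A B : Subgroup G} (hle : A ≤ B) (hB : Group.IsNilpotent ↥B) :
    Group.IsNilpotent ↥A := by
  haveI : Group.IsNilpotent ↥B := hB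
  exact Group.nilpotent_of_mulEquiv (subgroupOfEquivOfLe hle)

lemma closure_pair_hyper [Finite G] {z g x : G} (hz : z ∈ hypercenter G)
    (h : Group.IsNilpotent (closure ({g, x} : Set G))) :
    Group.IsNilpotent (closure ({z * g, x} : Set G)) := by
  have hle : closure ({z * g, x} : Set G) ≤ hypercenter G ⊔ closure ({g, x} : Set G) := by
    rw [closure_le]
    rintro y (rfl | rfl)
    · exact mul_mem (mem_sup_left hz)
        (mem_sup_right (subset_closure (Set.mem_insert g {x})))
    · exact mem_sup_right (subset_closure (Set.mem_insert_of_mem g rfl))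
  exact isNilpotent_of_le hle (hypercenter_sup_nilpotent _ h)

end Hyper

section Commute2

lemma center_nontrivial_of_nilpotent (H : Type*) [Group H] [Finite H] [Nontrivial H]
    (hH : Group.IsNilpotent H) : Nontrivial (Subgroup.center H) := by
  by_contra hc
  have hbot : Subgroup.center H = ⊥ := by
    rcases (Subgroup.center H).bot_or_nontrivial with h | h
    · exact h
    · exact absurd h hc
  have key : ∀ n, Subgroup.upperCentralSeries H n = ⊥ := by
    intro n
    induction n with
    | zero => rfl
    | succ j ih =>
      ext y
      simp only [mem_bot]
      rw [Subgroup.mem_upperCentralSeries_succ_iff]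
      constructor
      · intro hy
        have hyc : y ∈ Subgroup.center H := by
          rw [Subgroup.mem_center_iff]
          intro g
          have h1 := hy g
          rw [ih, mem_bot] at h1
          have h2 : Commute y g := commutatorElement_eq_one_iff_commute.mp (by rw [commutatorElement_def]; exact h1)
          exact h2.symm.eq
        rw [hbot, mem_bot] at hyc
        exact hyc
      · rintro rfl
        intro g; simp [ih]
  obtain ⟨n, hn⟩ := hH
  obtain ⟨a, b, hab⟩ := exists_pair_ne H
  have ha : a ∈ (⊥ : Subgroup H) := by rw [← key n, hn]; trivial
  have hb : b ∈ (⊥ : Subgroup H) := by rw [← key n, hn]; trivial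
  rw [mem_bot] at ha hb
  exact hab (ha.trans hb.symm)

universe u

lemma commute_two_pow_odd_aux :
    ∀ (n : ℕ) (H : Type u) [Group H] [Finite H], Nat.card H ≤ n → Group.IsNilpotent H →
      ∀ t y : H, (∃ k, orderOf t = 2 ^ k) → Odd (orderOf y) → Commute t y := by
  intro n
  induction n with
  | zero =>
      intro H _ _ hcard _ t y _ _
      have : 0 < Nat.card H := Nat.card_pos
      omega
  | succ n ih =>
      intro H _ _ hcard hnil t y hk hodd
      rcases subsingleton_or_nontrivial H with hs | hnt
      · show t * y = y * t
        exact Subsingleton.elim _ _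
      · haveI := center_nontrivial_of_nilpotent H hnil
        set Z := Subgroup.center H with hZ
        have hcard2 : Nat.card (H ⧸ Z) < Nat.card H := by
          have h1 : Nat.card H = Nat.card (H ⧸ Z) * Nat.card Z :=
            Subgroup.card_eq_card_quotient_mul_card_subgroup Z
          have h2 : 2 ≤ Nat.card Z := Finite.one_lt_card_iff_nontrivial.mpr ‹Nontrivial Z›
          have h3 : 0 < Nat.card (H ⧸ Z) := Nat.card_pos
          nlinarith
        haveI : Group.IsNilpotent (H ⧸ Z) :=
          Group.nilpotent_of_surjective (QuotientGroup.mk' Z) (QuotientGroup.mk'_surjective Z)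
        set π := QuotientGroup.mk' Z with hπ
        have hcomm : Commute (π t) (π y) := by
          apply ih (H ⧸ Z) (by omega) ‹_› _ _ ?_ ?_
          · obtain ⟨k, hkk⟩ := hk
            have hdvd : orderOf (π t) ∣ 2 ^ k := hkk ▸ orderOf_map_dvd π t
            obtain ⟨j, _, hj⟩ := (Nat.dvd_prime_pow Nat.prime_two).mp hdvd
            exact ⟨j, hj⟩
          · have hdvd : orderOf (π y) ∣ orderOf y := orderOf_map_dvd π y
            rcases Nat.even_or_odd (orderOf (π y)) with he | ho
            · exfalso
              have h2 : 2 ∣ orderOf y := dvd_trans he.two_dvd hdvd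
              rcases hodd with ⟨m, hm⟩
              omega
            · exact ho
        set c := t * y * t⁻¹ * y⁻¹ with hc
        have hcz : c ∈ Z := by
          have hc1 : π c = 1 := by
            have h1 : π t * π y = π y * π t := hcomm
            simp only [hc, map_mul, map_inv]
            rw [h1]
            group
          rwa [← QuotientGroup.ker_mk' Z, MonoidHom.mem_ker]
        have hcc : ∀ g : H, Commute c g := fun g =>
          (Subgroup.mem_center_iff.mp hcz g).symm
        have hkey : t * y = c * y * t := by rw [hc]; group
        have claim1 : ∀ m : ℕ, t ^ m * y = c ^ m * y * t ^ m := by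
          intro m
          induction m with
          | zero => simp
          | succ i ihm =>
              calc t ^ (i+1) * y = t * (t ^ i * y) := by rw [pow_succ', mul_assoc]
              _ = t * (c ^ i * y * t ^ i) := by rw [ihm]
              _ = t * c ^ i * y * t ^ i := by simp [mul_assoc]
              _ = c ^ i * t * y * t ^ i := by rw [← ((hcc t).pow_left i).eq]
              _ = c ^ i * (t * y) * t ^ i := by simp [mul_assoc]
              _ = c ^ i * (c * y * t) * t ^ i := by rw [hkey]
              _ = (c ^ i * c) * y * (t * t ^ i) := by simp [mul_assoc]
              _ = c ^ (i+1) * y * t ^ (i+1) := by rw [← pow_succ, ← pow_succ']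
        have claim2 : ∀ m : ℕ, t * y ^ m = c ^ m * y ^ m * t := by
          intro m
          induction m with
          | zero => simp
          | succ i ihm =>
              calc t * y ^ (i+1) = (t * y ^ i) * y := by rw [pow_succ, mul_assoc]
              _ = c ^ i * y ^ i * t * y := by rw [ihm]
              _ = c ^ i * y ^ i * (t * y) := by simp [mul_assoc]
              _ = c ^ i * y ^ i * (c * y * t) := by rw [hkey]
              _ = c ^ i * (y ^ i * c) * (y * t) := by simp [mul_assoc]
              _ = c ^ i * (c * y ^ i) * (y * t) := by rw [(hcc (y ^ i)).eq]
              _ = (c ^ i * c) * (y ^ i * y) * t := by simp [mul_assoc]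
              _ = c ^ (i+1) * y ^ (i+1) * t := by rw [← pow_succ, ← pow_succ]
        obtain ⟨k, hkk⟩ := hk
        have ht1 : t ^ (2 ^ k) = 1 := by rw [← hkk]; exact pow_orderOf_eq_one t
        have hy1 : y ^ orderOf y = 1 := pow_orderOf_eq_one y
        have hc2 : c ^ (2 ^ k) = 1 := by
          have := claim1 (2 ^ k)
          rw [ht1, one_mul, mul_one] at this
          exact (right_eq_mul.mp this)
        have hcodd : c ^ orderOf y = 1 := by
          have := claim2 (orderOf y)
          rw [hy1, mul_one, mul_one] at this
          exact (right_eq_mul.mp this)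
        have hd1 : orderOf c ∣ 2 ^ k := orderOf_dvd_of_pow_eq_one hc2
        have hd2 : orderOf c ∣ orderOf y := orderOf_dvd_of_pow_eq_one hcodd
        have hcop : Nat.Coprime (2 ^ k) (orderOf y) :=
          Nat.Coprime.pow_left k (hodd.coprime_two_left)
        have : orderOf c ∣ 1 := hcop ▸ Nat.dvd_gcd hd1 hd2
        have hc1 : c = 1 := orderOf_eq_one_iff.mp (Nat.dvd_one.mp this)
        have : t * y * t⁻¹ * y⁻¹ = 1 := hc ▸ hc1
        exact commutatorElement_eq_one_iff_commute.mp (by rw [commutatorElement_def]; exact this)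

end Commute2

section Baer
variable {G : Type*} [Group G] [Finite G]

lemma commute_of_mem_nilpotentizer_two_pow_odd {t y : G} (ht : t ∈ nilpotentizer G)
    (hk : ∃ k, orderOf t = 2 ^ k) (hy : Odd (orderOf y)) : Commute t y := by
  set H := Subgroup.closure ({t, y} : Set G) with hH
  have htm : t ∈ H := subset_closure (Set.mem_insert t {y})
  have hym : y ∈ H := subset_closure (Set.mem_insert_of_mem t rfl)
  have hnil : Group.IsNilpotent ↥H := ht y
  have hcomm : Commute (⟨t, htm⟩ : ↥H) ⟨y, hym⟩ := by
    apply commute_two_pow_odd_aux (Nat.card ↥H) ↥H le_rfl hnil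
    · obtain ⟨k, hkk⟩ := hk
      exact ⟨k, by rw [orderOf_mk, hkk]⟩
    · rw [orderOf_mk]; exact hy
  have := congrArg (Subtype.val) hcomm
  exact this

lemma mem_hypercenter_of_normal_pgroup (S : Subgroup G) [hSn : S.Normal]
    (hS : IsPGroup 2 ↥S) (K : Subgroup G) [hKn : K.Normal]
    (hKC : K ≤ Subgroup.centralizer (S : Set G))
    (hQ : IsPGroup 2 (G ⧸ K)) : S ≤ hypercenter G := by
  classical
  haveI : Fact (Nat.Prime 2) := ⟨Nat.prime_two⟩
  set ψ : G →* MulAut ↥S := MulAut.conjNormal with hψ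
  have hker : ∀ g ∈ K, ψ g = 1 := by
    intro g hg
    ext s
    show ((MulAut.conjNormal g) s : G) = s
    rw [MulAut.conjNormal_apply]
    have := Subgroup.mem_centralizer_iff.mp (hKC hg) (s : G) s.2
    rw [← this]
    group
  set φ : G ⧸ K →* MulAut ↥S := QuotientGroup.lift K ψ hker with hφ
  set W := SemidirectProduct ↥S (G ⧸ K) φ with hW
  haveI : Finite W := by
    apply Finite.of_injective (fun w : W => (w.left, w.right))
    intro a b h
    simp only [Prod.mk.injEq] at h
    exact SemidirectProduct.ext h.1 h.2
  have hWp : IsPGroup 2 W := by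
    intro w
    obtain ⟨a, ha⟩ := hQ (SemidirectProduct.rightHom w)
    have h1 : SemidirectProduct.rightHom (w ^ (2^a)) = 1 := by rw [map_pow]; exact ha
    have h2 : w ^ (2^a) ∈ SemidirectProduct.inl.range := by
      rw [SemidirectProduct.range_inl_eq_ker_rightHom]
      exact h1
    obtain ⟨s, hs⟩ := h2
    obtain ⟨b, hb⟩ := hS s
    refine ⟨a + b, ?_⟩
    rw [pow_add, pow_mul, ← hs, ← map_pow, hb, map_one]
  have hWnil : Group.IsNilpotent W := hWp.isNilpotent
  obtain ⟨n, hn⟩ := hWnil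
  have claim : ∀ (i : ℕ) (s : ↥S), SemidirectProduct.inl s ∈ Subgroup.upperCentralSeries W i →
      (s : G) ∈ Subgroup.upperCentralSeries G i := by
    intro i
    induction i with
    | zero =>
        intro s hs
        rw [Subgroup.upperCentralSeries_zero, mem_bot] at hs ⊢
        have : s = 1 := SemidirectProduct.inl_injective (by rw [hs, map_one])
        rw [this, OneMemClass.coe_one]
    | succ j ih =>
        intro s hs
        rw [Subgroup.mem_upperCentralSeries_succ_iff] at hs ⊢
        intro g
        have h1 := hs (SemidirectProduct.inr (QuotientGroup.mk g))
        set q : G ⧸ K := QuotientGroup.mk g with hq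
        have h2 : SemidirectProduct.inl s * SemidirectProduct.inr q *
            (SemidirectProduct.inl s)⁻¹ * (SemidirectProduct.inr q)⁻¹
            = (SemidirectProduct.inl (s * (φ q) s⁻¹) : W) := by
          rw [map_mul, SemidirectProduct.inl_aut, map_inv, map_inv]
          group
        rw [commutatorElement_def, h2] at h1
        have h3 := ih _ h1
        have h4 : ((s * (φ q) s⁻¹ : ↥S) : G) = (s : G) * g * (s : G)⁻¹ * g⁻¹ := by
          have : ((φ q) s⁻¹ : G) = g * ((s⁻¹ : ↥S) : G) * g⁻¹ := by
            show ((ψ g) s⁻¹ : G) = g * ((s⁻¹ : ↥S) : G) * g⁻¹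
            rw [MulAut.conjNormal_apply]
          push_cast [this]
          group
        rwa [h4, ← commutatorElement_def] at h3
  intro x hx
  have := claim n ⟨x, hx⟩ (by rw [hn]; trivial)
  exact ucs_le_hypercenter n this

lemma invol_mem_hypercenter {t : G} (ht : t ∈ nilpotentizer G) (h2 : t * t = 1) :
    t ∈ hypercenter G := by
  classical
  haveI : Fact (Nat.Prime 2) := ⟨Nat.prime_two⟩
  have htk : ∃ k, orderOf t = 2 ^ k := by
    have hdvd : orderOf t ∣ 2 ^ 1 := orderOf_dvd_of_pow_eq_one (by rw [pow_one, pow_two]; exact h2)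
    obtain ⟨j, _, hj⟩ := (Nat.dvd_prime_pow Nat.prime_two).mp hdvd
    exact ⟨j, hj⟩
  set K := Subgroup.closure {g : G | Odd (orderOf g)} with hK
  haveI hKn : K.Normal := by
    constructor
    intro n hn g
    have : K.map (MulAut.conj g).toMonoidHom ≤ K := by
      rw [hK, MonoidHom.map_closure]
      apply Subgroup.closure_mono
      rintro x ⟨w, hw, rfl⟩
      show Odd (orderOf ((MulAut.conj g).toMonoidHom w))
      rw [orderOf_injective (MulAut.conj g).toMonoidHom (MulAut.conj g).injective w]
      exact hw
    have hmem := this (mem_map_of_mem (MulAut.conj g).toMonoidHom hn)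
    simpa using hmem
  have hKcomm : ∀ y ∈ K, y * t = t * y := by
    have hle : K ≤ Subgroup.centralizer {t} := by
      rw [hK]
      apply (closure_le _).mpr
      intro y hy
      rw [SetLike.mem_coe, Subgroup.mem_centralizer_iff]
      rintro h rfl
      exact commute_of_mem_nilpotentizer_two_pow_odd ht htk hy
    intro y hy
    exact (Subgroup.mem_centralizer_iff.mp (hle hy) t rfl).symm
  have hQ : IsPGroup 2 (G ⧸ K) := by
    intro q
    obtain ⟨g, rfl⟩ := QuotientGroup.mk'_surjective K q
    set o := orderOf g with ho
    have hone : o ≠ 0 := (orderOf_pos g).ne'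
    refine ⟨o.factorization 2, ?_⟩
    have hoddpow : Odd (orderOf (g ^ (2 ^ o.factorization 2))) := by
      rw [orderOf_pow, ← ho, Nat.gcd_eq_right (Nat.ordProj_dvd o 2)]
      rcases Nat.even_or_odd (o / 2 ^ o.factorization 2) with he | hoo
      · exact absurd he.two_dvd (Nat.not_dvd_ordCompl Nat.prime_two hone)
      · exact hoo
    have hmemK : g ^ (2 ^ o.factorization 2) ∈ K := subset_closure hoddpow
    rw [← map_pow]
    exact (QuotientGroup.eq_one_iff _).mpr hmemK
  set Hc := Subgroup.centralizer (K : Set G) with hHc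
  haveI hHcn : Hc.Normal := by
    constructor
    intro n hn g
    rw [Subgroup.mem_centralizer_iff] at hn ⊢
    intro h hh
    have hh' : g⁻¹ * h * g ∈ K := by
      have := hKn.conj_mem h hh g⁻¹
      simpa using this
    have hcm := hn _ hh'
    calc h * (g * n * g⁻¹) = g * ((g⁻¹ * h * g) * n) * g⁻¹ := by group
    _ = g * (n * (g⁻¹ * h * g)) * g⁻¹ := by rw [hcm]
    _ = (g * n * g⁻¹) * h := by group
  have htHc : t ∈ Hc := by
    rw [Subgroup.mem_centralizer_iff]
    exact fun y hy => hKcomm y hy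
  have hHc_nil : Group.IsNilpotent ↥Hc := by
    set f := (QuotientGroup.mk' K).comp Hc.subtype with hf
    apply @Subgroup.isNilpotent_of_ker_le_center _ _ _ _ f.rangeRestrict ?_ ?_
    · rw [MonoidHom.ker_rangeRestrict]
      intro x hx
      rw [MonoidHom.mem_ker] at hx
      have hxK : (x : G) ∈ K := (QuotientGroup.eq_one_iff _).mp hx
      rw [Subgroup.mem_center_iff]
      intro h
      apply Subtype.ext
      exact (Subgroup.mem_centralizer_iff.mp h.2 (x : G) hxK).symm
    · exact (IsPGroup.to_subgroup hQ f.range).isNilpotent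
  set P : Sylow 2 ↥Hc := default with hP
  have h03 : Group.IsNilpotent ↥Hc ↔
      ∀ (p : ℕ), Fact p.Prime → ∀ (P : Sylow p ↥Hc), (↑P : Subgroup ↥Hc).Normal :=
    (isNilpotent_of_finite_tfae (G := ↥Hc)).out 0 3
  have hPnorm : (P : Subgroup ↥Hc).Normal := h03.mp hHc_nil 2 ⟨Nat.prime_two⟩ P
  haveI := hPnorm
  have hPchar : (P : Subgroup ↥Hc).Characteristic := Sylow.characteristic_of_normal P hPnorm
  set S := (P : Subgroup ↥Hc).map Hc.subtype with hS
  haveI hSn : S.Normal := by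
    constructor
    rintro n ⟨m, hm, rfl⟩ g
    have hgHc : g * (m : G) * g⁻¹ ∈ Hc := hHcn.conj_mem _ m.2 g
    set e := (MulAut.conjNormal (H := Hc) g) with he
    have hmemP : e m ∈ (P : Subgroup ↥Hc) := by
      have hle := characteristic_iff_le_comap.mp hPchar e
      exact hle hm
    exact ⟨e m, hmemP, MulAut.conjNormal_apply g m⟩
  have hSp : IsPGroup 2 ↥S := by
    intro x
    obtain ⟨m, hm, hcoe⟩ := x.2
    obtain ⟨k, hk⟩ := P.isPGroup' ⟨m, hm⟩
    refine ⟨k, ?_⟩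
    have e1 : (m : ↥Hc) ^ (2^k) = 1 := by
      have := congrArg (Subtype.val) hk
      simpa using this
    have e2 : (x : G) ^ (2^k) = 1 := by
      rw [← hcoe]
      have := congrArg (Subtype.val) e1
      simpa using this
    apply Subtype.ext
    push_cast
    exact e2
  have htS : t ∈ S := by
    set tc : ↥Hc := ⟨t, htHc⟩ with htc
    have htc2 : tc ^ (2 : ℕ) = 1 := by
      apply Subtype.ext
      rw [pow_two]
      exact h2
    have hP2 : IsPGroup 2 ↥(Subgroup.zpowers tc) := by
      intro x
      refine ⟨1, ?_⟩
      obtain ⟨m, hmx⟩ := x.2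
      have hx2 : ((x : ↥Hc)) ^ (2:ℕ) = 1 := by
        rw [← hmx]
        calc (tc ^ m) ^ (2:ℕ) = tc ^ (m * ((2:ℕ):ℤ)) := by
              rw [← zpow_natCast (tc ^ m), ← zpow_mul]
        _ = (tc ^ ((2:ℕ) : ℤ)) ^ m := by rw [mul_comm, zpow_mul]
        _ = 1 := by rw [zpow_natCast, htc2, one_zpow]
      apply Subtype.ext
      simpa using hx2
    obtain ⟨Q, hQle⟩ := hP2.exists_le_sylow
    haveI := Sylow.unique_of_normal P hPnorm
    have hQP : Q = P := Subsingleton.elim _ _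
    refine ⟨tc, ?_, rfl⟩
    rw [← hQP]
    exact hQle (Subgroup.mem_zpowers tc)
  have hKS : K ≤ Subgroup.centralizer (S : Set G) := by
    intro y hy
    rw [Subgroup.mem_centralizer_iff]
    rintro h ⟨m, hm, rfl⟩
    exact (Subgroup.mem_centralizer_iff.mp m.2 y hy).symm
  exact mem_hypercenter_of_normal_pgroup S hSp K hKS hQ htS

end Baer

section Parity

lemma even_ncard_of_fpf_invol {α : Type*} (σ : α → α) :
    ∀ (n : ℕ) (S : Set α), S.Finite → S.ncard = n →
      (∀ a ∈ S, σ a ∈ S) → (∀ a ∈ S, σ (σ a) = a) → (∀ a ∈ S, σ a ≠ a) → Even n := by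
  intro n
  induction n using Nat.strong_induction_on with
  | _ n IH =>
    intro S hfin hcard hmem hinv hne
    rcases S.eq_empty_or_nonempty with rfl | ⟨a, ha⟩
    · rw [Set.ncard_empty] at hcard
      rw [← hcard]
      exact Even.zero
    · set S' := S \ {a, σ a} with hS'
      have hsub : ({a, σ a} : Set α) ⊆ S := by
        rintro y (rfl | rfl)
        exacts [ha, hmem a ha]
      have hpair : ({a, σ a} : Set α).ncard = 2 := Set.ncard_pair (Ne.symm (hne a ha))
      have hfin' : S'.Finite := hfin.subset Set.diff_subset
      have hle : 2 ≤ n := by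
        rw [← hcard, ← hpair]
        exact Set.ncard_le_ncard hsub hfin
      have hcard' : S'.ncard = n - 2 := by
        rw [hS', Set.ncard_diff hsub, hpair, hcard]
      have hmem' : ∀ b ∈ S', σ b ∈ S' := by
        rintro b ⟨hbS, hbn⟩
        refine ⟨hmem b hbS, ?_⟩
        rintro (h1 | h2)
        · apply hbn
          have : b = σ a := by rw [← hinv b hbS, h1]
          right
          exact this
        · apply hbn
          have : b = a := by rw [← hinv b hbS, h2, hinv a ha]
          left
          exact this
      have hinv' : ∀ b ∈ S', σ (σ b) = b := fun b hb => hinv b hb.1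
      have hne' : ∀ b ∈ S', σ b ≠ b := fun b hb => hne b hb.1
      have hev := IH (n-2) (by omega) S' hfin' hcard' hmem' hinv' hne'
      rcases hev with ⟨m, hm⟩
      exact ⟨m + 1, by omega⟩

lemma exists_invol_of_even {G : Type*} [Group G] (S : Set G) (hfin : S.Finite)
    (h1 : (1:G) ∈ S) (hinv : ∀ g ∈ S, g⁻¹ ∈ S) (he : Even S.ncard) :
    ∃ t ∈ S, t ≠ 1 ∧ t * t = 1 := by
  by_contra hc
  push_neg at hc
  have key : Even ((S \ {1}).ncard) := by
    apply even_ncard_of_fpf_invol (fun g => g⁻¹) _ _ (hfin.subset Set.diff_subset) rfl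
    · rintro b ⟨hbS, hbn⟩
      refine ⟨hinv b hbS, ?_⟩
      simp only [Set.mem_singleton_iff] at hbn ⊢
      simpa using hbn
    · intro b _
      simp
    · rintro b ⟨hbS, hbn⟩ hEq
      simp only [Set.mem_singleton_iff] at hbn
      have hbb : b * b = 1 := by
        nth_rewrite 2 [← hEq]
        simp
      exact hc b hbS hbn hbb
  have hdiff := Set.ncard_diff_singleton_add_one h1 hfin
  rcases key with ⟨m, hm⟩
  rcases he with ⟨p, hp⟩
  omega

end Parity

section Main

variable {G : Type*} [Group G]

lemma nilpotent_closure_singleton (x : G) :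
    Group.IsNilpotent (Subgroup.closure ({x} : Set G)) := by
  have hz : Subgroup.closure ({x} : Set G) = Subgroup.zpowers x :=
    (Subgroup.zpowers_eq_closure x).symm
  rw [hz]
  exact ⟨⟨1, Subgroup.upperCentralSeries_one_eq_top_iff.mpr inferInstance⟩⟩

lemma one_mem_nilpotentizer : (1 : G) ∈ nilpotentizer G := by
  intro h
  have heq : Subgroup.closure ({1, h} : Set G) = Subgroup.closure ({h} : Set G) := by
    apply le_antisymm
    · apply (closure_le _).mpr
      rintro y (rfl | rfl)
      · exact one_mem _
      · exact subset_closure rfl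
    · apply Subgroup.closure_mono
      simp
  rw [heq]
  exact nilpotent_closure_singleton h

lemma inv_mem_nilpotentizer {g : G} (hg : g ∈ nilpotentizer G) : g⁻¹ ∈ nilpotentizer G := by
  intro h
  have hle : Subgroup.closure ({g⁻¹, h} : Set G) ≤ Subgroup.closure ({g, h} : Set G) := by
    apply (closure_le _).mpr
    rintro y (rfl | rfl)
    · exact inv_mem (subset_closure (Set.mem_insert g {h}))
    · exact subset_closure (Set.mem_insert_of_mem g rfl)
  exact isNilpotent_of_le hle (hg h)

lemma hyper_mul_mem_nilpotentizer [Finite G] {z w : G} (hz : z ∈ hypercenter G)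
    (hw : w ∈ nilpotentizer G) : z * w ∈ nilpotentizer G :=
  fun h => closure_pair_hyper hz (hw h)

end Main

theorem nilpotentGraph_odd_degree_of_even_nilpotentizer {G : Type*} [Group G] [Finite G]
    (hG : ¬ Group.IsNilpotent G) (h2 : Even ((nilpotentizer G).ncard)) :
    ∀ x : {x : G // x ∉ nilpotentizer G},
      Odd (((nilpotentGraph G).neighborSet x).ncard) := by
  intro x
  obtain ⟨t, htmem, htne, htt⟩ := exists_invol_of_even (nilpotentizer G) (Set.toFinite _)
    one_mem_nilpotentizer (fun g hg => inv_mem_nilpotentizer hg) h2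
  have hthyp : t ∈ hypercenter G := invol_mem_hypercenter htmem htt
  set S : Set G := {g : G | g ∉ nilpotentizer G ∧
    Group.IsNilpotent (Subgroup.closure ({g, (x:G)} : Set G))} with hSdef
  have hxS : (x : G) ∈ S := by
    refine ⟨x.2, ?_⟩
    have hpair : ({(x:G), (x:G)} : Set G) = {(x:G)} := by simp
    rw [hpair]
    exact nilpotent_closure_singleton _
  have hmem : ∀ g ∈ S, t * g ∈ S := by
    rintro g ⟨hg1, hg2⟩
    constructor
    · intro hcon
      apply hg1
      have := hyper_mul_mem_nilpotentizer hthyp hcon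
      rwa [← mul_assoc, htt, one_mul] at this
    · exact closure_pair_hyper hthyp hg2
  have hinvol : ∀ g ∈ S, t * (t * g) = g := fun g _ => by rw [← mul_assoc, htt, one_mul]
  have hfpf : ∀ g ∈ S, t * g ≠ g := fun g _ h => htne (mul_eq_right.mp h)
  have hSeven : Even S.ncard :=
    even_ncard_of_fpf_invol (fun g => t * g) S.ncard S (Set.toFinite _) rfl hmem hinvol hfpf
  have himg : (Subtype.val '' ((nilpotentGraph G).neighborSet x)) = S \ {(x:G)} := by
    ext b
    constructor
    · rintro ⟨v, hv, rfl⟩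
      obtain ⟨hne, hnil⟩ := (hv : (nilpotentGraph G).Adj x v)
      refine ⟨⟨v.2, by rwa [Set.pair_comm]⟩, ?_⟩
      simp only [Set.mem_singleton_iff]
      intro hvx
      exact hne (Subtype.ext hvx).symm
    · rintro ⟨⟨hb1, hb2⟩, hbx⟩
      simp only [Set.mem_singleton_iff] at hbx
      refine ⟨⟨b, hb1⟩, ?_, rfl⟩
      show (nilpotentGraph G).Adj x ⟨b, hb1⟩
      refine ⟨?_, by rwa [Set.pair_comm]⟩
      intro hxb
      exact hbx (congrArg Subtype.val hxb).symm
  have hcount : ((nilpotentGraph G).neighborSet x).ncard = (S \ {(x:G)}).ncard := by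
    rw [← himg, Set.ncard_image_of_injective _ Subtype.val_injective]
  have hplus := Set.ncard_diff_singleton_add_one hxS (Set.toFinite _)
  rcases hSeven with ⟨m, hm⟩
  rw [hcount]
  exact ⟨m - 1, by omega⟩
end
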